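/- arXiv:1602.03297 — 6 statements merged into one kernel-verified Lean document; each statement's English description precedes it below -/
import Mathlib

section
/- Congruence invariance: for any invertible matrix M and positive definite A, B, and s ∈ ℝ, M (A#ₛB) M* = (M A M*) #ₛ (M B M*). -/
open scoped ComplexOrder

/-- Real power of a matrix via the continuous functional calculus (for Hermitian matrices). -/
noncomputable def mpow {d : ℕ} (A : Matrix (Fin d) (Fin d) ℂ) (s : ℝ) : Matrix (Fin d) (Fin d) ℂ :=
  cfc (fun x : ℝ => x ^ s) A

/-- The s-weighted geometric mean A #ₛ B = A^(1/2) (A^(-1/2) B A^(-1/2))^s A^(1/2). -/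
noncomputable def gm {d : ℕ} (s : ℝ) (A B : Matrix (Fin d) (Fin d) ℂ) : Matrix (Fin d) (Fin d) ℂ :=
  mpow A (1/2) * mpow (mpow A (-(1/2)) * B * mpow A (-(1/2))) s * mpow A (1/2)
namespace GMAux

open Matrix

variable {d : ℕ}

abbrev Mat (d : ℕ) := Matrix (Fin d) (Fin d) ℂ

lemma continuousOn_spec (f : ℝ → ℝ) (X : Mat d) : ContinuousOn f (spectrum ℝ X) :=
  continuousOn_iff_continuous_restrict.mpr continuous_of_discreteTopology

/-- Conjugation by a unitary as a star algebra homomorphism. -/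
noncomputable def conjSAH (U : Mat d) (hU : U ∈ unitary (Mat d)) : Mat d →⋆ₐ[ℂ] Mat d where
  toFun x := U * x * star U
  map_one' := by simpa using (Unitary.mem_iff.mp hU).2
  map_mul' x y := by
    have h1 : star U * U = 1 := (Unitary.mem_iff.mp hU).1
    calc U * (x * y) * star U = U * (x * ((star U * U) * y)) * star U := by rw [h1, one_mul]
      _ = U * x * star U * (U * y * star U) := by simp only [mul_assoc]
  map_zero' := by simp
  map_add' x y := by simp [mul_add, add_mul]
  commutes' c := by
    have h2 : U * star U = 1 := (Unitary.mem_iff.mp hU).2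
    simp [Algebra.algebraMap_eq_smul_one, mul_smul_comm, smul_mul_assoc, h2]
  map_star' x := by
    simp only [star_trivial, StarMul.star_mul, star_star, mul_assoc]

lemma continuous_conjSAH (U : Mat d) (hU : U ∈ unitary (Mat d)) :
    Continuous (conjSAH U hU) := by
  show Continuous fun x : Mat d => U * x * star U
  exact (continuous_const.matrix_mul continuous_id).matrix_mul continuous_const

lemma conj_cfc {U : Mat d} (hU : U ∈ unitary (Mat d))
    (f : ℝ → ℝ) (X : Mat d) (hX : IsSelfAdjoint X) :
    U * cfc f X * star U = cfc f (U * X * star U) :=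
  StarAlgHomClass.map_cfc (R := ℝ) (S := ℂ) (conjSAH U hU) f X
    (continuousOn_spec f X) (continuous_conjSAH U hU) hX (hX.conjugate U)

variable {A : Mat d} (hA : A.PosDef)

lemma spec_pos (hA : A.PosDef) : ∀ x ∈ spectrum ℝ A, 0 < x := by
  intro x hx
  rw [Matrix.IsHermitian.spectrum_real_eq_range_eigenvalues hA.isHermitian] at hx
  obtain ⟨i, rfl⟩ := hx
  exact hA.eigenvalues_pos i

lemma mpow_isSelfAdjoint (A : Mat d) (s : ℝ) : IsSelfAdjoint (mpow A s) :=
  cfc_predicate _ _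

lemma mpow_mul_mpow (hA : A.PosDef) (r t : ℝ) : mpow A r * mpow A t = mpow A (r + t) := by
  have hsa : IsSelfAdjoint A := hA.isHermitian
  rw [mpow, mpow, mpow, ← cfc_mul _ _ A (continuousOn_spec _ A) (continuousOn_spec _ A)]
  exact cfc_congr fun x hx => (Real.rpow_add (spec_pos hA x hx) r t).symm

lemma mpow_one (hA : A.PosDef) : mpow A 1 = A := by
  have hsa : IsSelfAdjoint A := hA.isHermitian
  rw [mpow]
  calc cfc (fun x : ℝ => x ^ (1:ℝ)) A = cfc (fun x : ℝ => x) A :=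
        cfc_congr fun x _ => Real.rpow_one x
    _ = A := cfc_id ℝ A

lemma mpow_zero (hA : A.PosDef) : mpow A 0 = 1 := by
  have hsa : IsSelfAdjoint A := hA.isHermitian
  rw [mpow]
  calc cfc (fun x : ℝ => x ^ (0:ℝ)) A = cfc (1 : ℝ → ℝ) A :=
        cfc_congr fun x _ => Real.rpow_zero x
    _ = 1 := cfc_one ℝ A

lemma half_mul_half (hA : A.PosDef) : mpow A (1/2) * mpow A (1/2) = A := by
  rw [mpow_mul_mpow hA]; norm_num; exact mpow_one hA

lemma half_mul_neg_half (hA : A.PosDef) : mpow A (1/2) * mpow A (-(1/2)) = 1 := by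
  rw [mpow_mul_mpow hA]; norm_num; exact mpow_zero hA

lemma neg_half_mul_half (hA : A.PosDef) : mpow A (-(1/2)) * mpow A (1/2) = 1 := by
  rw [mpow_mul_mpow hA]; norm_num; exact mpow_zero hA

lemma neg_half_mul_neg_half (hA : A.PosDef) : mpow A (-(1/2)) * mpow A (-(1/2)) = A⁻¹ := by
  rw [mpow_mul_mpow hA]
  refine Matrix.inv_eq_right_inv ?_ |>.symm
  have : A * mpow A (-(1/2) + -(1/2)) = mpow A 1 * mpow A (-(1/2) + -(1/2)) := by
    rw [mpow_one hA]
  rw [this, mpow_mul_mpow hA]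
  norm_num
  exact mpow_zero hA

/-- Congruence preserves positive definiteness. -/
lemma posDef_conj {M : Mat d} (hA : A.PosDef) (hM : IsUnit M) : (M * A * Mᴴ).PosDef := by
  refine Matrix.posDef_iff_dotProduct_mulVec.mpr ⟨?_, ?_⟩
  · have := hA.isHermitian
    unfold Matrix.IsHermitian at *
    rw [conjTranspose_mul, conjTranspose_mul, conjTranspose_conjTranspose, this, mul_assoc]
  · intro x hx
    have hxM : Mᴴ *ᵥ x ≠ 0 := by
      intro h
      apply hx
      have hMH : IsUnit Mᴴ := by
        rw [Matrix.isUnit_iff_isUnit_det, Matrix.det_conjTranspose, isUnit_star]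
        exact Matrix.isUnit_iff_isUnit_det M |>.mp hM
      have := Matrix.mulVec_injective_iff_isUnit.mpr hMH
      exact this (by simpa using h)
    have := hA.dotProduct_mulVec_pos hxM
    simpa [Matrix.star_mulVec, Matrix.mulVec_mulVec, Matrix.dotProduct_mulVec,
      Matrix.vecMul_vecMul, mul_assoc] using this


lemma lcancel {P Q : Mat d} (h : P * Q = 1) (x : Mat d) : P * (Q * x) = x := by
  rw [← mul_assoc, h, one_mul]

lemma lassoc {P Q R : Mat d} (h : P * Q = R) (x : Mat d) : P * (Q * x) = R * x := by
  rw [← mul_assoc, h]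

end GMAux

open GMAux in
open Matrix in
theorem gm_congruence_invariance {d : ℕ} (A B M : Matrix (Fin d) (Fin d) ℂ)
    (hA : A.PosDef) (hB : B.PosDef) (hM : IsUnit M) (s : ℝ) :
    M * gm s A B * Mᴴ = gm s (M * A * Mᴴ) (M * B * Mᴴ) := by
  have hA' : (M * A * Mᴴ).PosDef := posDef_conj hA hM
  have hB' : (M * B * Mᴴ).PosDef := posDef_conj hB hM
  set A' := M * A * Mᴴ with hA'def
  set B' := M * B * Mᴴ with hB'def
  set S := mpow A (1/2) with hS
  set N := mpow A (-(1/2)) with hN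
  set S' := mpow A' (1/2) with hS'
  set N' := mpow A' (-(1/2)) with hN'
  have sS : star S = S := (mpow_isSelfAdjoint A _).star_eq
  have sN : star N = N := (mpow_isSelfAdjoint A _).star_eq
  have sS' : star S' = S' := (mpow_isSelfAdjoint A' _).star_eq
  have sN' : star N' = N' := (mpow_isSelfAdjoint A' _).star_eq
  have hSS : S * S = A := half_mul_half hA
  have hSN : S * N = 1 := half_mul_neg_half hA
  have hNS : N * S = 1 := neg_half_mul_half hA
  have hNN : N * N = A⁻¹ := neg_half_mul_neg_half hA
  have hSS' : S' * S' = A' := half_mul_half hA'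
  have hSN' : S' * N' = 1 := half_mul_neg_half hA'
  have hNS' : N' * S' = 1 := neg_half_mul_half hA'
  have hNN' : N' * N' = A'⁻¹ := neg_half_mul_neg_half hA'
  have hdet : IsUnit M.det := (Matrix.isUnit_iff_isUnit_det M).mp hM
  have hdetH : IsUnit Mᴴ.det := by
    rw [Matrix.det_conjTranspose]; exact isUnit_star.mpr hdet
  have hMinv : ∀ x : Mat d, M⁻¹ * (M * x) = x :=
    lcancel (Matrix.nonsing_inv_mul M hdet)
  have hMHinv : ∀ x : Mat d, Mᴴ * (Mᴴ⁻¹ * x) = x :=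
    lcancel (Matrix.mul_nonsing_inv Mᴴ hdetH)
  have hA'assoc : ∀ x : Mat d, M * (A * (Mᴴ * x)) = A' * x := by
    intro x; simp only [← mul_assoc]; rfl
  have hB'assoc : ∀ x : Mat d, M * (B * (Mᴴ * x)) = B' * x := by
    intro x; simp only [← mul_assoc]; rfl
  set U := N' * M * S with hUdef
  have hstarU : star U = S * (Mᴴ * N') := by
    calc star U = star S * (star M * star N') := by
          rw [hUdef]; simp only [StarMul.star_mul, mul_assoc]
      _ = S * (Mᴴ * N') := by rw [sS, sN', Matrix.star_eq_conjTranspose]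
  have hUU : U * star U = 1 := by
    rw [hstarU, hUdef]
    simp only [mul_assoc]
    rw [lassoc hSS, hA'assoc, ← hSS']
    simp only [mul_assoc]
    rw [hSN', mul_one]
    exact hNS'
  have hA'inv : A'⁻¹ = Mᴴ⁻¹ * (A⁻¹ * M⁻¹) := by
    rw [hA'def, Matrix.mul_inv_rev, Matrix.mul_inv_rev]
  have hstarUU : star U * U = 1 := by
    rw [hstarU, hUdef]
    simp only [mul_assoc]
    rw [lassoc hNN', hA'inv]
    simp only [mul_assoc]
    rw [hMHinv, hMinv, ← hNN]
    simp only [mul_assoc]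
    rw [hNS, mul_one]
    exact hSN
  have hUmem : U ∈ unitary (Mat d) := Unitary.mem_iff.mpr ⟨hstarUU, hUU⟩
  have hBsa : IsSelfAdjoint B := hB.isHermitian
  have hC : IsSelfAdjoint (N * B * N) := by
    have := hBsa.conjugate N
    rwa [sN] at this
  have hUCU : U * (N * B * N) * star U = N' * B' * N' := by
    rw [hstarU, hUdef]
    simp only [mul_assoc]
    rw [lcancel hSN, lcancel hNS, hB'assoc]
  unfold gm
  rw [← hS, ← hN, ← hS', ← hN', ← hUCU]
  have hcfc : mpow (U * (N * B * N) * star U) s = U * mpow (N * B * N) s * star U := by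
    simp only [mpow]
    exact (conj_cfc hUmem (fun x : ℝ => x ^ s) (N * B * N) hC).symm
  rw [hcfc, hstarU, hUdef]
  simp only [mul_assoc]
  rw [lcancel hSN', hNS', mul_one]
end

section
/- Joint concavity of the weighted geometric mean: for positive definite matrices A, B, C, D and λ, s ∈ [0,1], (λA + (1−λ)B) #ₛ (λC + (1−λ)D) ⪰ λ(A#ₛC) + (1−λ)(B#ₛD) in the Loewner order. -/
open scoped ComplexOrder

section GMAux
open Matrix

variable {d : ℕ} {A B X Y : Matrix (Fin d) (Fin d) ℂ}


lemma contOn_finite {s : Set ℝ} (hs : s.Finite) (f : ℝ → ℝ) : ContinuousOn f s := by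
  have : Finite s := hs.to_subtype
  rw [continuousOn_iff_continuous_restrict]
  exact continuous_of_discreteTopology

lemma contOn (A : Matrix (Fin d) (Fin d) ℂ) (f : ℝ → ℝ) : ContinuousOn f (spectrum ℝ A) :=
  contOn_finite A.finite_real_spectrum f

lemma spec_pos (hA : A.PosDef) : ∀ x ∈ spectrum ℝ A, 0 < x := by
  intro x hx
  rw [hA.isHermitian.spectrum_real_eq_range_eigenvalues] at hx
  obtain ⟨i, rfl⟩ := hx
  exact hA.eigenvalues_pos i

lemma spec_nonneg (hA : A.PosSemidef) : ∀ x ∈ spectrum ℝ A, 0 ≤ x := by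
  intro x hx
  rw [hA.isHermitian.spectrum_real_eq_range_eigenvalues] at hx
  obtain ⟨i, rfl⟩ := hx
  exact hA.eigenvalues_nonneg i

lemma cfc_posSemidef (hA : A.IsHermitian) {f : ℝ → ℝ}
    (hf : ∀ x ∈ spectrum ℝ A, 0 ≤ f x) : (cfc f A).PosSemidef := by
  rw [hA.cfc_eq, Matrix.IsHermitian.cfc, Unitary.conjStarAlgAut_apply, Matrix.star_eq_conjTranspose]
  exact (Matrix.posSemidef_diagonal_iff.mpr fun i => by
    simpa using hf _ (hA.eigenvalues_mem_spectrum_real i)).mul_mul_conjTranspose_same _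

lemma posDef_conj (hM : A.PosDef) (B : Matrix (Fin d) (Fin d) ℂ) (hB : IsUnit B) :
    (Bᴴ * A * B).PosDef := by
  refine .of_dotProduct_mulVec_pos (isHermitian_conjTranspose_mul_mul B hM.1) fun ⦃x⦄ hx => ?_
  have hBx : B *ᵥ x ≠ 0 :=
    (Matrix.mulVec_injective_iff_isUnit.mpr hB).ne_iff' (by simp) |>.2 hx
  simpa only [star_mulVec, dotProduct_mulVec, vecMul_vecMul] using hM.dotProduct_mulVec_pos hBx

-- mpow lemmas
lemma mpow_isHermitian (A : Matrix (Fin d) (Fin d) ℂ) (s : ℝ) : (mpow A s).IsHermitian :=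
  cfc_predicate _ _

lemma mpow_posSemidef (hA : A.PosSemidef) (s : ℝ) : (mpow A s).PosSemidef :=
  cfc_posSemidef hA.isHermitian fun x hx => Real.rpow_nonneg (spec_nonneg hA x hx) s

lemma mpow_mul_mpow (hA : A.PosDef) (s t : ℝ) : mpow A s * mpow A t = mpow A (s + t) := by
  rw [mpow, mpow, mpow, ← cfc_mul _ _ A (contOn A _) (contOn A _)]
  exact cfc_congr fun x hx => (Real.rpow_add (spec_pos hA x hx) s t).symm

lemma mpow_zero (hA : A.IsHermitian) : mpow A 0 = 1 := by
  rw [mpow]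
  simp only [Real.rpow_zero]
  exact cfc_const_one ℝ A hA

lemma mpow_one (hA : A.IsHermitian) : mpow A 1 = A := by
  rw [mpow]
  simp only [Real.rpow_one]
  exact cfc_id' ℝ A hA

lemma mpow_isUnit (hA : A.PosDef) (s : ℝ) : IsUnit (mpow A s) :=
  ⟨⟨mpow A s, mpow A (-s),
    by rw [mpow_mul_mpow hA, add_neg_cancel, mpow_zero hA.isHermitian],
    by rw [mpow_mul_mpow hA, neg_add_cancel, mpow_zero hA.isHermitian]⟩, rfl⟩

lemma mpow_posDef (hA : A.PosDef) (s : ℝ) : (mpow A s).PosDef := by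
  refine .of_dotProduct_mulVec_pos (mpow_posSemidef hA.posSemidef s).isHermitian fun ⦃x⦄ hx => ?_
  have h1 := (mpow_posSemidef hA.posSemidef s).dotProduct_mulVec_nonneg x
  refine lt_of_le_of_ne h1 fun h0 => hx ?_
  have hz : mpow A s *ᵥ x = 0 :=
    ((mpow_posSemidef hA.posSemidef s).dotProduct_mulVec_zero_iff x).mp h0.symm
  have := (Matrix.mulVec_injective_iff_isUnit.mpr (mpow_isUnit hA s))
  exact this.eq_iff.mp (by simpa using hz)

lemma mpow_neg_mul (hA : A.PosDef) (s : ℝ) : mpow A (-s) * mpow A s = 1 := by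
  rw [mpow_mul_mpow hA, neg_add_cancel, mpow_zero hA.isHermitian]

lemma inv_eq_mpow (hA : A.PosDef) : A⁻¹ = mpow A (-1) :=
  Matrix.inv_eq_left_inv (by
    have : mpow A (-1) * A = mpow A (-1) * mpow A 1 := by rw [mpow_one hA.isHermitian]
    rw [this, mpow_mul_mpow hA, neg_add_cancel, mpow_zero hA.isHermitian])

lemma mpow_half_sq (hA : A.PosSemidef) : mpow A (1/2) * mpow A (1/2) = A := by
  rw [mpow, ← cfc_mul _ _ A (contOn A _) (contOn A _)]
  refine (cfc_congr fun x hx => ?_).trans (cfc_id' ℝ A hA.isHermitian)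
  rw [← Real.rpow_add' (spec_nonneg hA x hx) (by norm_num)]
  norm_num

lemma psd_of_sq_psd (hX : X.PosSemidef) (hY : Y.PosSemidef)
    (h : (Y * Y - X * X).PosSemidef) : (Y - X).PosSemidef := by
  have hZ : (Y - X).IsHermitian := hY.isHermitian.sub hX.isHermitian
  refine hZ.posSemidef_iff_eigenvalues_nonneg.mpr fun i => show 0 ≤ hZ.eigenvalues i from ?_
  set μ := hZ.eigenvalues i with hμdef
  set v : Fin d → ℂ := ⇑(hZ.eigenvectorBasis i) with hvdef
  have hv0 : v ≠ 0 := by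
    have := hZ.eigenvectorBasis.orthonormal.ne_zero i
    intro hc
    apply this
    ext j
    exact congrFun hc j
  have hZv : (Y - X) *ᵥ v = μ • v := hZ.mulVec_eigenvectorBasis i
  set qY := star v ⬝ᵥ (Y *ᵥ v) with hqY
  set qX := star v ⬝ᵥ (X *ᵥ v) with hqX
  have key : star v ⬝ᵥ ((Y * Y - X * X) *ᵥ v) = μ • (qY + qX) := by
    have hsplit : Y * Y - X * X = Y * (Y - X) + (Y - X) * X := by noncomm_ring
    have h1 : star v ⬝ᵥ ((Y * (Y - X)) *ᵥ v) = μ • qY := by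
      rw [← mulVec_mulVec, hZv, mulVec_smul, dotProduct_smul, hqY]
    have h2 : star v ⬝ᵥ (((Y - X) * X) *ᵥ v) = μ • qX := by
      rw [← mulVec_mulVec, dotProduct_mulVec]
      have : star v ᵥ* (Y - X) = μ • star v := by
        have := star_mulVec (M := Y - X) (v := v)
        rw [hZ.eq] at this
        rw [← this, hZv, star_smul, star_trivial]
      rw [this, smul_dotProduct, hqX, dotProduct_mulVec]
    rw [hsplit, add_mulVec, dotProduct_add, h1, h2, smul_add]
  have hq : (0 : ℂ) ≤ μ • (qY + qX) := key ▸ h.dotProduct_mulVec_nonneg v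
  by_contra hμneg
  push_neg at hμneg
  have hYnn : (0:ℂ) ≤ qY := hY.dotProduct_mulVec_nonneg v
  have hXnn : (0:ℂ) ≤ qX := hX.dotProduct_mulVec_nonneg v
  rcases eq_or_lt_of_le (add_nonneg hYnn hXnn) with hc | hc
  · have hqY0 : qY = 0 := le_antisymm (by calc qY ≤ qY + qX := le_add_of_nonneg_right hXnn
                                            _ = 0 := hc.symm) hYnn
    have hqX0 : qX = 0 := by
      have h' := hc.symm
      rw [hqY0, zero_add] at h'
      exact h'
    have hXv : X *ᵥ v = 0 := (hX.dotProduct_mulVec_zero_iff v).mp hqX0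
    have hYv : Y *ᵥ v = 0 := (hY.dotProduct_mulVec_zero_iff v).mp hqY0
    have hμ0 : μ = 0 := by
      have h0 : μ • v = 0 := by rw [← hZv, sub_mulVec, hXv, hYv, sub_zero]
      exact (smul_eq_zero.mp h0).resolve_right hv0
    exact absurd hμ0 hμneg.ne
  · have : μ • (qY + qX) < 0 := by
      rw [Complex.real_smul]
      exact mul_neg_of_neg_of_pos (by exact_mod_cast hμneg) hc
    exact absurd hq this.not_ge

lemma psd_conj (h : (Y - X).PosSemidef) (T : Matrix (Fin d) (Fin d) ℂ) :
    (Tᴴ * Y * T - Tᴴ * X * T).PosSemidef := by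
  have := h.conjTranspose_mul_mul_same T
  simpa [Matrix.mul_sub, Matrix.sub_mul] using this

lemma psd_trans {Z : Matrix (Fin d) (Fin d) ℂ} (h1 : (Y - X).PosSemidef)
    (h2 : (Z - Y).PosSemidef) : (Z - X).PosSemidef := by
  have := h2.add h1
  simpa using this

lemma psd_abs_sub_self (hY : Y.IsHermitian) : (mpow (Y * Y) (1/2) - Y).PosSemidef := by
  have hY' : IsSelfAdjoint Y := hY
  have hYY : Y * Y = cfc (fun x : ℝ => x * x) Y := by
    rw [cfc_mul _ _ Y (contOn Y _) (contOn Y _), cfc_id' ℝ Y hY']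
  have habs : mpow (Y * Y) (1/2) = cfc (fun x : ℝ => |x|) Y := by
    rw [mpow, hYY,
      ← cfc_comp _ _ Y hY' (contOn_finite (Matrix.finite_real_spectrum.image _) _) (contOn Y _)]
    refine cfc_congr fun x hx => ?_
    simp only [Function.comp_apply]
    rw [← Real.sqrt_eq_rpow, Real.sqrt_mul_self_eq_abs]
  have hsub : cfc (fun x : ℝ => |x| - x) Y = cfc (fun x : ℝ => |x|) Y - Y := by
    rw [cfc_sub _ _ Y (contOn Y _) (contOn Y _)]
    rw [cfc_id' ℝ Y hY']
  rw [habs, ← hsub]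
  exact cfc_posSemidef hY fun x _ => sub_nonneg.mpr (le_abs_self x)


lemma inner_posDef (hA : A.PosDef) (hB : B.PosDef) :
    (mpow A (-(1/2)) * B * mpow A (-(1/2))).PosDef := by
  have h := posDef_conj hB (mpow A (-(1/2))) (mpow_isUnit hA _)
  rwa [(mpow_isHermitian A (-(1/2))).eq] at h

lemma gm_posDef (hA : A.PosDef) (hB : B.PosDef) (s : ℝ) : (gm s A B).PosDef := by
  have h := posDef_conj (mpow_posDef (inner_posDef hA hB) s) (mpow A (1/2)) (mpow_isUnit hA _)
  rwa [(mpow_isHermitian A (1/2)).eq] at h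

lemma gm_eq_unique (hA : A.PosDef) (hB : B.PosDef) {G : Matrix (Fin d) (Fin d) ℂ}
    (hG : G.PosDef) (hMul : G * A⁻¹ * G = B) : G = gm (1/2) A B := by
  set q := mpow A (1/2) with hq
  set p := mpow A (-(1/2)) with hp
  have hqp : q * p = 1 := by
    rw [hq, hp, mpow_mul_mpow hA, add_neg_cancel, mpow_zero hA.isHermitian]
  have hpq : p * q = 1 := by
    rw [hq, hp, mpow_mul_mpow hA, neg_add_cancel, mpow_zero hA.isHermitian]
  have hpp : p * p = mpow A (-1) := by
    rw [hp, mpow_mul_mpow hA]; norm_num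
  have hqp' : ∀ M, q * (p * M) = M := fun M => by rw [← mul_assoc, hqp, one_mul]
  have hpq' : ∀ M, p * (q * M) = M := fun M => by rw [← mul_assoc, hpq, one_mul]
  set Xin := p * B * p with hXin
  have hXinPD : Xin.PosDef := inner_posDef hA hB
  set K := p * G * p with hK
  have hKPD : K.PosDef := by
    have h := posDef_conj hG p (mpow_isUnit hA _)
    rwa [(mpow_isHermitian A (-(1/2))).eq] at h
  have hKsq : K * K = Xin := by
    rw [hK, hXin, ← hMul, inv_eq_mpow hA, ← hpp]
    simp only [mul_assoc]
  set L := mpow Xin (1/2) with hL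
  have hLsq : L * L = Xin := mpow_half_sq hXinPD.posSemidef
  have hKL : K = L := by
    open scoped MatrixOrder in
    calc K = CFC.sqrt (K * K) := (CFC.sqrt_mul_self K hKPD.posSemidef.nonneg).symm
      _ = CFC.sqrt (L * L) := by rw [hKsq, hLsq]
      _ = L := CFC.sqrt_mul_self L (mpow_posSemidef hXinPD.posSemidef _).nonneg
  have hGK : G = q * K * q := by
    rw [hK]
    simp only [mul_assoc, hqp']
    rw [hpq, mul_one]
  rw [hGK, hKL]
  rfl

lemma star_dot_self_eigenvector {hZ : X.IsHermitian} (i : Fin d) :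
    star (⇑(hZ.eigenvectorBasis i)) ⬝ᵥ ⇑(hZ.eigenvectorBasis i) = 1 := by
  have h := hZ.eigenvectorBasis.orthonormal.1 i
  have h2 := inner_self_eq_norm_sq_to_K (𝕜 := ℂ) (hZ.eigenvectorBasis i)
  rw [h] at h2
  have h3 := EuclideanSpace.inner_eq_star_dotProduct (𝕜 := ℂ)
    (hZ.eigenvectorBasis i) (hZ.eigenvectorBasis i)
  rw [h2] at h3
  rw [dotProduct_comm]
  simpa using h3.symm

lemma spec_le_one (hX : X.IsHermitian) (h : ((1 : Matrix (Fin d) (Fin d) ℂ) - X).PosSemidef) :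
    ∀ x ∈ spectrum ℝ X, x ≤ 1 := by
  intro x hx
  rw [hX.spectrum_real_eq_range_eigenvalues] at hx
  obtain ⟨i, rfl⟩ := hx
  set v : Fin d → ℂ := ⇑(hX.eigenvectorBasis i) with hv
  have hXv : X *ᵥ v = hX.eigenvalues i • v := hX.mulVec_eigenvectorBasis i
  have hnn := h.dotProduct_mulVec_nonneg v
  rw [sub_mulVec, one_mulVec, dotProduct_sub, hXv, dotProduct_smul,
    star_dot_self_eigenvector i, Complex.real_smul, mul_one] at hnn
  have : ((1 - hX.eigenvalues i : ℝ) : ℂ) = 1 - (hX.eigenvalues i : ℂ) := by push_cast; ring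
  rw [← sub_nonneg, ← Complex.zero_le_real, this]
  exact hnn

lemma inv_antitone (hA : A.PosDef) (hB : B.PosDef) (h : (B - A).PosSemidef) :
    (A⁻¹ - B⁻¹).PosSemidef := by
  set p := mpow B (-(1/2)) with hp
  set q := mpow B (1/2) with hq
  have hqp : q * p = 1 := by
    rw [hq, hp, mpow_mul_mpow hB, add_neg_cancel, mpow_zero hB.isHermitian]
  have hpq : p * q = 1 := by
    rw [hq, hp, mpow_mul_mpow hB, neg_add_cancel, mpow_zero hB.isHermitian]
  have hpp : p * p = B⁻¹ := by
    rw [inv_eq_mpow hB, hp, mpow_mul_mpow hB]; norm_num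
  set X := p * A * p with hX
  have hXPD : X.PosDef := by
    have h' := posDef_conj hA p (mpow_isUnit hB _)
    rwa [(mpow_isHermitian B (-(1/2))).eq] at h'
  have hXsa : IsSelfAdjoint X := hXPD.isHermitian
  have hpBp : p * B * p = 1 := by
    have hBq : B * p = q := by
      conv_lhs => rw [← mpow_one hB.isHermitian]
      rw [hp, hq, mpow_mul_mpow hB]; norm_num
    rw [mul_assoc, hBq, hpq]
  have h1X : ((1 : Matrix (Fin d) (Fin d) ℂ) - X).PosSemidef := by
    have := psd_conj h p
    rwa [(mpow_isHermitian B (-(1/2))).eq, ← hX, ← hp, hpBp] at this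
  -- X⁻¹ - 1 is PSD
  have hXinv : (mpow X (-1) - 1).PosSemidef := by
    have h1 : (1 : Matrix (Fin d) (Fin d) ℂ) = cfc (fun _ : ℝ => 1) X :=
      (cfc_const_one ℝ X hXsa).symm
    rw [mpow, h1, ← cfc_sub _ _ X (contOn X _) (contOn X _)]
    refine cfc_posSemidef hXPD.isHermitian fun x hx => ?_
    have hx0 := spec_pos hXPD x hx
    have hx1 := spec_le_one hXPD.isHermitian h1X x hx
    rw [Real.rpow_neg_one]
    have := one_le_inv_iff₀.mpr ⟨hx0, hx1⟩  -- check name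
    linarith
  have hXinv_eq : mpow X (-1) = q * A⁻¹ * q := by
    rw [← inv_eq_mpow hXPD]
    refine Matrix.inv_eq_right_inv ?_
    rw [hX]
    have : p * A * p * (q * A⁻¹ * q) = p * A * (p * q) * A⁻¹ * q := by
      simp only [mul_assoc]
    have hAA : A * A⁻¹ = 1 :=
      Matrix.mul_nonsing_inv A ((Matrix.isUnit_iff_isUnit_det A).mp hA.isUnit)
    rw [this, hpq, mul_one, mul_assoc p A A⁻¹, hAA, mul_one, hpq]
  have hfinal := psd_conj hXinv p
  rw [(mpow_isHermitian B (-(1/2))).eq, ← hp, hXinv_eq, mul_one, hpp] at hfinal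
  have hrw : p * (q * A⁻¹ * q) * p = A⁻¹ := by
    have : p * (q * A⁻¹ * q) * p = (p * q) * A⁻¹ * (q * p) := by simp only [mul_assoc]
    rw [this, hpq, hqp, one_mul, mul_one]
  rwa [hrw] at hfinal

lemma gm_half_mul (hA : A.PosDef) (hB : B.PosDef) :
    gm (1/2) A B * A⁻¹ * gm (1/2) A B = B := by
  set p := mpow A (-(1/2)) with hp
  set q := mpow A (1/2) with hq
  have hqp : q * p = 1 := by
    rw [hq, hp, mpow_mul_mpow hA, add_neg_cancel, mpow_zero hA.isHermitian]
  have hpq : p * q = 1 := by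
    rw [hq, hp, mpow_mul_mpow hA, neg_add_cancel, mpow_zero hA.isHermitian]
  have hpp : p * p = A⁻¹ := by
    rw [inv_eq_mpow hA, hp, mpow_mul_mpow hA]; norm_num
  set L := mpow (p * B * p) (1/2) with hL
  have hLsq : L * L = p * B * p := mpow_half_sq (inner_posDef hA hB).posSemidef
  have hG : gm (1/2) A B = q * L * q := rfl
  rw [hG, ← hpp]
  have e1 : q * L * q * (p * p) * (q * L * q) = q * (L * ((q * p) * ((p * q) * (L * q)))) := by
    simp only [mul_assoc]
  rw [e1, hqp, hpq, one_mul, one_mul, ← mul_assoc L L q, hLsq]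
  have e2 : q * (p * B * p * q) = (q * p) * B * (p * q) := by simp only [mul_assoc]
  rw [e2, hqp, hpq, one_mul, mul_one]

lemma gm_half_le (hA : A.PosDef) (hB : B.PosDef) {X : Matrix (Fin d) (Fin d) ℂ}
    (hX : X.IsHermitian) (h : (B - X * A⁻¹ * X).PosSemidef) :
    (gm (1/2) A B - X).PosSemidef := by
  set p := mpow A (-(1/2)) with hp
  set q := mpow A (1/2) with hq
  have hph : p.IsHermitian := mpow_isHermitian A _
  have hqh : q.IsHermitian := mpow_isHermitian A _
  have hqp : q * p = 1 := by
    rw [hq, hp, mpow_mul_mpow hA, add_neg_cancel, mpow_zero hA.isHermitian]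
  have hpq : p * q = 1 := by
    rw [hq, hp, mpow_mul_mpow hA, neg_add_cancel, mpow_zero hA.isHermitian]
  have hpp : p * p = A⁻¹ := by
    rw [inv_eq_mpow hA, hp, mpow_mul_mpow hA]; norm_num
  set Y := p * X * p with hY
  have hYh : Y.IsHermitian := by
    have := Matrix.isHermitian_conjTranspose_mul_mul p hX
    rwa [hph.eq] at this
  have h1 : (p * B * p - Y * Y).PosSemidef := by
    have hc := psd_conj h p
    rw [hph.eq] at hc
    have e : p * (X * A⁻¹ * X) * p = Y * Y := by
      rw [← hpp, hY]
      simp only [mul_assoc]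
    rwa [e] at hc
  have hYYpsd : (Y * Y).PosSemidef := by
    have := Matrix.posSemidef_conjTranspose_mul_self Y
    rwa [hYh.eq] at this
  have h2 : (mpow (Y * Y) (1/2) - Y).PosSemidef := psd_abs_sub_self hYh
  have h3 : (mpow (p * B * p) (1/2) - mpow (Y * Y) (1/2)).PosSemidef := by
    refine psd_of_sq_psd (mpow_posSemidef hYYpsd _)
      (mpow_posSemidef (inner_posDef hA hB).posSemidef _) ?_
    rwa [mpow_half_sq hYYpsd, mpow_half_sq (inner_posDef hA hB).posSemidef]
  have hchain := psd_trans h2 h3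
  have hfinal := psd_conj hchain q
  rw [hqh.eq] at hfinal
  have eX : q * Y * q = X := by
    rw [hY]
    have : q * (p * X * p) * q = (q * p) * X * (p * q) := by simp only [mul_assoc]
    rw [this, hqp, hpq, one_mul, mul_one]
  rw [eX] at hfinal
  exact hfinal

lemma gm_half_congr (hA : A.PosDef) (hB : B.PosDef) {P : Matrix (Fin d) (Fin d) ℂ}
    (hP : P.PosDef) : P * gm (1/2) A B * P = gm (1/2) (P * A * P) (P * B * P) := by
  have hPh := hP.isHermitian
  have hPA : (P * A * P).PosDef := by
    have := posDef_conj hA P hP.isUnit; rwa [hPh.eq] at this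
  have hPB : (P * B * P).PosDef := by
    have := posDef_conj hB P hP.isUnit; rwa [hPh.eq] at this
  have hG := gm_posDef hA hB (1/2)
  have hPG : (P * gm (1/2) A B * P).PosDef := by
    have := posDef_conj hG P hP.isUnit; rwa [hPh.eq] at this
  refine gm_eq_unique hPA hPB hPG ?_
  have hPinv : (P * A * P)⁻¹ = P⁻¹ * A⁻¹ * P⁻¹ := by
    rw [Matrix.mul_inv_rev, Matrix.mul_inv_rev]
    simp only [mul_assoc]
  have hPP : P⁻¹ * P = 1 := Matrix.nonsing_inv_mul P ((Matrix.isUnit_iff_isUnit_det P).mp hP.isUnit)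
  have hPP' : P * P⁻¹ = 1 := Matrix.mul_nonsing_inv P ((Matrix.isUnit_iff_isUnit_det P).mp hP.isUnit)
  rw [hPinv]
  have e : P * gm (1/2) A B * P * (P⁻¹ * A⁻¹ * P⁻¹) * (P * gm (1/2) A B * P)
      = P * (gm (1/2) A B * ((P * P⁻¹) * A⁻¹ * (P⁻¹ * P)) * gm (1/2) A B) * P := by
    simp only [mul_assoc]
  rw [e, hPP, hPP', one_mul, mul_one, gm_half_mul hA hB]

lemma gm_half_mono {A' B' : Matrix (Fin d) (Fin d) ℂ} (hA : A.PosDef) (hB : B.PosDef)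
    (hA' : A'.PosDef) (hB' : B'.PosDef)
    (h1 : (A' - A).PosSemidef) (h2 : (B' - B).PosSemidef) :
    (gm (1/2) A' B' - gm (1/2) A B).PosSemidef := by
  set G := gm (1/2) A B with hGdef
  have hG := gm_posDef hA hB (1/2)
  refine gm_half_le hA' hB' hG.isHermitian ?_
  have hinv : (A⁻¹ - A'⁻¹).PosSemidef := inv_antitone hA hA' h1
  have hc := psd_conj hinv G
  rw [hG.isHermitian.eq] at hc
  rw [gm_half_mul hA hB] at hc
  exact psd_trans hc h2

lemma herm_smul {n : Type*} [Fintype n] {X : Matrix n n ℂ} (l : ℝ) (h : X.IsHermitian) :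
    (l • X).IsHermitian := by
  rw [Matrix.IsHermitian, Matrix.conjTranspose_smul, star_trivial, h.eq]

lemma psd_smul {n : Type*} [Fintype n] {X : Matrix n n ℂ} {l : ℝ} (hl : 0 ≤ l)
    (hX : X.PosSemidef) : (l • X).PosSemidef := by
  refine .of_dotProduct_mulVec_nonneg (herm_smul l hX.isHermitian) fun x => ?_
  rw [smul_mulVec, dotProduct_smul, Complex.real_smul]
  exact mul_nonneg (by exact_mod_cast hl) (hX.dotProduct_mulVec_nonneg x)

lemma posDef_combo {l : ℝ} (h0 : 0 ≤ l) (h1 : l ≤ 1) (hA : A.PosDef) (hB : B.PosDef) :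
    (l • A + (1 - l) • B).PosDef := by
  refine .of_dotProduct_mulVec_pos ((herm_smul l hA.isHermitian).add (herm_smul (1 - l) hB.isHermitian)) fun ⦃x⦄ hx => ?_
  rw [add_mulVec, smul_mulVec, smul_mulVec, dotProduct_add, dotProduct_smul,
    dotProduct_smul, Complex.real_smul, Complex.real_smul]
  rcases eq_or_lt_of_le h0 with h | h
  · rw [← h]
    norm_num
    exact hB.dotProduct_mulVec_pos hx
  · refine add_pos_of_pos_of_nonneg (mul_pos ?_ (hA.dotProduct_mulVec_pos hx)) (mul_nonneg ?_ (hB.posSemidef.dotProduct_mulVec_nonneg x))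
    · exact_mod_cast h
    · have : (0:ℝ) ≤ 1 - l := by linarith
      exact_mod_cast this

lemma gm_half_concave (hA : A.PosDef) (hC : C.PosDef) {B D : Matrix (Fin d) (Fin d) ℂ}
    (hB : B.PosDef) (hD : D.PosDef) {l : ℝ} (h0 : 0 ≤ l) (h1 : l ≤ 1) :
    (gm (1/2) (l • A + (1 - l) • B) (l • C + (1 - l) • D)
      - (l • gm (1/2) A C + (1 - l) • gm (1/2) B D)).PosSemidef := by
  set Ga := gm (1/2) A C with hGa
  set Gb := gm (1/2) B D with hGb
  have hGaPD := gm_posDef hA hC (1/2)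
  have hGbPD := gm_posDef hB hD (1/2)
  set M := l • A + (1 - l) • B with hM
  set N := l • C + (1 - l) • D with hN
  set X := l • Ga + (1 - l) • Gb with hX
  have hMPD : M.PosDef := posDef_combo h0 h1 hA hB
  have hNPD : N.PosDef := posDef_combo h0 h1 hC hD
  have hXh : X.IsHermitian :=
    (herm_smul l hGaPD.isHermitian).add (herm_smul (1 - l) hGbPD.isHermitian)
  refine gm_half_le hMPD hNPD hXh ?_
  have hWa : (Matrix.fromBlocks A Ga Ga C).PosSemidef := by
    letI := hA.isUnit.invertible
    have hiff := Matrix.PosDef.fromBlocks₁₁ Ga C hA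
    rw [hGaPD.isHermitian.eq] at hiff
    rw [hiff, gm_half_mul hA hC, sub_self]
    exact Matrix.PosSemidef.zero
  have hWb : (Matrix.fromBlocks B Gb Gb D).PosSemidef := by
    letI := hB.isUnit.invertible
    have hiff := Matrix.PosDef.fromBlocks₁₁ Gb D hB
    rw [hGbPD.isHermitian.eq] at hiff
    rw [hiff, gm_half_mul hB hD, sub_self]
    exact Matrix.PosSemidef.zero
  have hW : (Matrix.fromBlocks M X X N).PosSemidef := by
    have hsum := (psd_smul h0 hWa).add (psd_smul (by linarith : (0:ℝ) ≤ 1 - l) hWb)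
    rw [Matrix.fromBlocks_smul, Matrix.fromBlocks_smul, Matrix.fromBlocks_add] at hsum
    exact hsum
  letI := hMPD.isUnit.invertible
  have hiff := Matrix.PosDef.fromBlocks₁₁ X N hMPD
  rw [hXh.eq] at hiff
  exact hiff.mp hW

lemma gm_zero (hA : A.PosDef) (hB : B.PosDef) : gm 0 A B = A := by
  show mpow A (1/2) * mpow (mpow A (-(1/2)) * B * mpow A (-(1/2))) 0 * mpow A (1/2) = A
  rw [mpow_zero (inner_posDef hA hB).isHermitian, mul_one, mpow_mul_mpow hA]
  norm_num
  exact mpow_one hA.isHermitian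

lemma gm_one (hA : A.PosDef) (hB : B.PosDef) : gm 1 A B = B := by
  show mpow A (1/2) * mpow (mpow A (-(1/2)) * B * mpow A (-(1/2))) 1 * mpow A (1/2) = B
  rw [mpow_one (inner_posDef hA hB).isHermitian]
  have hqp : mpow A (1/2) * mpow A (-(1/2)) = 1 := by
    rw [mpow_mul_mpow hA, add_neg_cancel, mpow_zero hA.isHermitian]
  have hpq : mpow A (-(1/2)) * mpow A (1/2) = 1 := by
    rw [mpow_mul_mpow hA, neg_add_cancel, mpow_zero hA.isHermitian]
  have e : mpow A (1/2) * (mpow A (-(1/2)) * B * mpow A (-(1/2))) * mpow A (1/2)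
      = (mpow A (1/2) * mpow A (-(1/2))) * B * (mpow A (-(1/2)) * mpow A (1/2)) := by
    simp only [mul_assoc]
  rw [e, hqp, hpq, one_mul, mul_one]

lemma mpow_inv' (hX : X.PosDef) (s : ℝ) : (mpow X s)⁻¹ = mpow X (-s) :=
  Matrix.inv_eq_right_inv (by rw [mpow_mul_mpow hX, add_neg_cancel, mpow_zero hX.isHermitian])

lemma gm_mpow_mpow (hX : X.PosDef) (s t : ℝ) :
    gm (1/2) (mpow X s) (mpow X t) = mpow X ((s + t)/2) := by
  refine (gm_eq_unique (mpow_posDef hX s) (mpow_posDef hX t) (mpow_posDef hX ((s + t)/2)) ?_).symm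
  rw [mpow_inv' hX s, mpow_mul_mpow hX, mpow_mul_mpow hX]
  congr 1
  ring

lemma gm_midpoint (hA : A.PosDef) (hB : B.PosDef) (s t : ℝ) :
    gm ((s + t)/2) A B = gm (1/2) (gm s A B) (gm t A B) := by
  set Xin := mpow A (-(1/2)) * B * mpow A (-(1/2)) with hXin
  have hXinPD : Xin.PosDef := inner_posDef hA hB
  have hq : (mpow A (1/2)).PosDef := mpow_posDef hA _
  have h1 : gm s A B = mpow A (1/2) * mpow Xin s * mpow A (1/2) := rfl
  have h2 : gm t A B = mpow A (1/2) * mpow Xin t * mpow A (1/2) := rfl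
  rw [h1, h2, ← gm_half_congr (mpow_posDef hXinPD s) (mpow_posDef hXinPD t) hq,
    gm_mpow_mpow hXinPD s t]
  rfl

lemma cont_mpow (hX : X.PosDef) : Continuous fun s : ℝ => mpow X s := by
  have he : (fun s : ℝ => mpow X s) = fun s =>
      (hX.isHermitian.eigenvectorUnitary : Matrix (Fin d) (Fin d) ℂ) *
        (Matrix.diagonal fun i => ((hX.isHermitian.eigenvalues i ^ s : ℝ) : ℂ)) *
        star (hX.isHermitian.eigenvectorUnitary : Matrix (Fin d) (Fin d) ℂ) := by
    funext s
    rw [mpow, hX.isHermitian.cfc_eq, Matrix.IsHermitian.cfc]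
    rfl
  rw [he]
  refine (Continuous.matrix_mul (Continuous.matrix_mul continuous_const ?_) continuous_const)
  refine Continuous.matrix_diagonal ?_
  refine continuous_pi fun i => ?_
  refine Complex.continuous_ofReal.comp ?_
  have hxi := hX.eigenvalues_pos i
  exact (Real.continuous_exp.comp (continuous_const.mul continuous_id)).congr
    fun s => (Real.rpow_def_of_pos hxi s).symm

lemma cont_gm (hA : A.PosDef) (hB : B.PosDef) : Continuous fun s : ℝ => gm s A B := by
  have : (fun s : ℝ => gm s A B) = fun s =>
      mpow A (1/2) * mpow (mpow A (-(1/2)) * B * mpow A (-(1/2))) s * mpow A (1/2) := rfl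
  rw [this]
  exact (continuous_const.matrix_mul (cont_mpow (inner_posDef hA hB))).matrix_mul continuous_const

lemma psd_limit {F : ℕ → Matrix (Fin d) (Fin d) ℂ} {L : Matrix (Fin d) (Fin d) ℂ}
    (hconv : Filter.Tendsto F Filter.atTop (nhds L)) (hpsd : ∀ n, (F n).PosSemidef)
    (hL : L.IsHermitian) : L.PosSemidef := by
  refine .of_dotProduct_mulVec_nonneg hL fun x => ?_
  have hq : Continuous fun M : Matrix (Fin d) (Fin d) ℂ => star x ⬝ᵥ M *ᵥ x :=
    (continuous_const.dotProduct (continuous_id.matrix_mulVec continuous_const))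
  have htd := (hq.tendsto L).comp hconv
  have hcl : IsClosed {z : ℂ | 0 ≤ z} := by
    have hset : {z : ℂ | 0 ≤ z} = Complex.re ⁻¹' (Set.Ici 0) ∩ Complex.im ⁻¹' {0} := by
      ext z
      simp only [Set.mem_setOf_eq, Set.mem_inter_iff, Set.mem_preimage, Set.mem_Ici,
        Set.mem_singleton_iff, Complex.le_def, Complex.zero_re, Complex.zero_im]
      tauto
    rw [hset]
    exact (isClosed_Ici.preimage Complex.continuous_re).inter
      (isClosed_singleton.preimage Complex.continuous_im)
  exact hcl.mem_of_tendsto htd (Filter.Eventually.of_forall fun n => (hpsd n).dotProduct_mulVec_nonneg x)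

def Pprop (d : ℕ) (s : ℝ) : Prop :=
  ∀ (A B C D : Matrix (Fin d) (Fin d) ℂ), A.PosDef → B.PosDef → C.PosDef → D.PosDef →
    ∀ l : ℝ, 0 ≤ l → l ≤ 1 →
      (gm s (l • A + (1 - l) • B) (l • C + (1 - l) • D)
        - (l • gm s A C + (1 - l) • gm s B D)).PosSemidef

lemma Pprop_zero : Pprop d 0 := by
  intro A B C D hA hB hC hD l hl0 hl1
  rw [gm_zero (posDef_combo hl0 hl1 hA hB) (posDef_combo hl0 hl1 hC hD),
    gm_zero hA hC, gm_zero hB hD, sub_self]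
  exact Matrix.PosSemidef.zero

lemma Pprop_one : Pprop d 1 := by
  intro A B C D hA hB hC hD l hl0 hl1
  rw [gm_one (posDef_combo hl0 hl1 hA hB) (posDef_combo hl0 hl1 hC hD),
    gm_one hA hC, gm_one hB hD, sub_self]
  exact Matrix.PosSemidef.zero

lemma Pprop_mid {a b : ℝ} (Pa : Pprop d a) (Pb : Pprop d b) : Pprop d ((a + b)/2) := by
  intro A B C D hA hB hC hD l hl0 hl1
  set M := l • A + (1 - l) • B with hM
  set N := l • C + (1 - l) • D with hN
  have hMPD : M.PosDef := posDef_combo hl0 hl1 hA hB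
  have hNPD : N.PosDef := posDef_combo hl0 hl1 hC hD
  have h1 := Pa A B C D hA hB hC hD l hl0 hl1
  have h2 := Pb A B C D hA hB hC hD l hl0 hl1
  set Pa' := l • gm a A C + (1 - l) • gm a B D with hPa'
  set Pb' := l • gm b A C + (1 - l) • gm b B D with hPb'
  have hPaPD : Pa'.PosDef := posDef_combo hl0 hl1 (gm_posDef hA hC a) (gm_posDef hB hD a)
  have hPbPD : Pb'.PosDef := posDef_combo hl0 hl1 (gm_posDef hA hC b) (gm_posDef hB hD b)
  have mono := gm_half_mono hPaPD hPbPD (gm_posDef hMPD hNPD a) (gm_posDef hMPD hNPD b) h1 h2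
  have conc := gm_half_concave (gm_posDef hA hC a) (gm_posDef hA hC b)
    (gm_posDef hB hD a) (gm_posDef hB hD b) hl0 hl1
  rw [← gm_midpoint hA hC a b, ← gm_midpoint hB hD a b] at conc
  rw [← gm_midpoint hMPD hNPD a b] at mono
  exact psd_trans conc mono

lemma Pprop_dyadic (n : ℕ) : ∀ k : ℕ, k ≤ 2^n → Pprop d ((k : ℝ) / 2^n) := by
  induction n with
  | zero =>
    intro k hk
    interval_cases k
    · simpa using Pprop_zero
    · simpa using Pprop_one
  | succ n ih =>
    intro k hk
    have h2 : (2:ℕ)^(n+1) = 2 * 2^n := by ring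
    rcases Nat.even_or_odd k with ⟨m, hm⟩ | ⟨m, hm⟩
    · have hmle : m ≤ 2^n := by omega
      have he : ((k : ℝ)) / 2^(n+1) = (m : ℝ) / 2^n := by
        subst hm; push_cast; field_simp; ring
      rw [he]
      exact ih m hmle
    · have hmle : m + 1 ≤ 2^n := by omega
      have he : ((k : ℝ)) / 2^(n+1) = ((m : ℝ)/2^n + ((m+1 : ℕ) : ℝ)/2^n)/2 := by
        subst hm; push_cast; field_simp; ring
      rw [he]
      exact Pprop_mid (ih m (by omega)) (ih (m+1) hmle)

lemma Pprop_all {s : ℝ} (h0 : 0 ≤ s) (h1 : s ≤ 1) : Pprop d s := by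
  intro A B C D hA hB hC hD l hl0 hl1
  set M := l • A + (1 - l) • B with hM
  set N := l • C + (1 - l) • D with hN
  have hMPD : M.PosDef := posDef_combo hl0 hl1 hA hB
  have hNPD : N.PosDef := posDef_combo hl0 hl1 hC hD
  set F : ℝ → Matrix (Fin d) (Fin d) ℂ :=
    fun t => gm t M N - (l • gm t A C + (1 - l) • gm t B D) with hF
  have hFcont : Continuous F := by
    refine (cont_gm hMPD hNPD).sub (Continuous.add ?_ ?_)
    · exact (cont_gm hA hC).const_smul l
    · exact (cont_gm hB hD).const_smul (1 - l)
  set seq : ℕ → ℝ := fun n => (⌊s * 2^n⌋₊ : ℝ) / 2^n with hseq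
  have hkle : ∀ n : ℕ, ⌊s * 2^n⌋₊ ≤ 2^n := by
    intro n
    have hle : s * 2^n ≤ ((2^n : ℕ) : ℝ) := by
      push_cast
      exact mul_le_of_le_one_left (by positivity) h1
    calc ⌊s * 2^n⌋₊ ≤ ⌊((2^n : ℕ) : ℝ)⌋₊ := Nat.floor_le_floor hle
      _ = 2^n := Nat.floor_natCast _
  have hpsd : ∀ n, (F (seq n)).PosSemidef := fun n =>
    Pprop_dyadic n _ (hkle n) A B C D hA hB hC hD l hl0 hl1
  have htend : Filter.Tendsto seq Filter.atTop (nhds s) := by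
    have hlow : ∀ n : ℕ, s - (1/2)^n ≤ seq n := by
      intro n
      have hpow : (0:ℝ) < 2^n := by positivity
      have hfl := Nat.lt_floor_add_one (s * 2^n)
      have hhalf : (1/2:ℝ)^n * 2^n = 1 := by rw [← mul_pow]; norm_num
      rw [show seq n = (⌊s * 2^n⌋₊ : ℝ)/2^n from rfl, le_div_iff₀ hpow]
      have he : (s - (1/2)^n) * 2^n = s * 2^n - 1 := by rw [sub_mul, hhalf]
      rw [he]
      linarith
    have hup : ∀ n : ℕ, seq n ≤ s := by
      intro n
      have hpow : (0:ℝ) < 2^n := by positivity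
      rw [show seq n = (⌊s * 2^n⌋₊ : ℝ)/2^n from rfl, div_le_iff₀ hpow]
      exact Nat.floor_le (mul_nonneg h0 (le_of_lt hpow))
    have hgl : Filter.Tendsto (fun n : ℕ => s - (1/2:ℝ)^n) Filter.atTop (nhds s) := by
      have h2 := tendsto_pow_atTop_nhds_zero_of_lt_one
        (by norm_num : (0:ℝ) ≤ 1/2) (by norm_num : (1/2:ℝ) < 1)
      simpa using tendsto_const_nhds.sub h2
    exact tendsto_of_tendsto_of_tendsto_of_le_of_le hgl tendsto_const_nhds hlow hup
  have hherm : (F s).IsHermitian := by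
    refine Matrix.IsHermitian.sub (gm_posDef hMPD hNPD s).isHermitian ?_
    exact (herm_smul l (gm_posDef hA hC s).isHermitian).add
      (herm_smul (1 - l) (gm_posDef hB hD s).isHermitian)
  exact psd_limit ((hFcont.tendsto s).comp htend) hpsd hherm

end GMAux

theorem gm_joint_concavity {d : ℕ} (A B C D : Matrix (Fin d) (Fin d) ℂ)
    (hA : A.PosDef) (hB : B.PosDef) (hC : C.PosDef) (hD : D.PosDef)
    (l s : ℝ) (hl : l ∈ Set.Icc (0 : ℝ) 1) (hs : s ∈ Set.Icc (0 : ℝ) 1) :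
    (gm s (l • A + (1 - l) • B) (l • C + (1 - l) • D)
      - (l • gm s A C + (1 - l) • gm s B D)).PosSemidef := by
  exact Pprop_all hs.1 hs.2 A B C D hA hB hC hD l hl.1 hl.2
end

section
/- For positive definite matrices A, B and s ∈ [0,1], Tr(A#ₛB) ≤ Tr(A^((1-s)/2) B^s A^((1-s)/2)). -/
set_option linter.unusedSectionVars false
set_option linter.unusedVariables false
set_option linter.unusedTactic false
set_option maxHeartbeats 1600000

open scoped ComplexOrder

section Helpers2
open Matrix Finset

variable {n : Type*} [Fintype n] [DecidableEq n]

lemma conj_mul_self (z : ℂ) : (starRingEnd ℂ) z * z = (Complex.normSq z : ℂ) := by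
  rw [mul_comm, Complex.mul_conj]

/-- trace of Mᴴ * diagonal δ * M -/
lemma trace_conj_diag_mid (M : Matrix n n ℂ) (δ : n → ℝ) :
    (Mᴴ * diagonal (fun k => (δ k : ℂ)) * M).trace
      = ((∑ j, ∑ k, δ k * Complex.normSq (M k j) : ℝ) : ℂ) := by
  push_cast
  simp only [Matrix.trace, Matrix.diag_apply, Matrix.mul_apply, Matrix.conjTranspose_apply,
    diagonal_apply, mul_ite, ite_mul, mul_zero, zero_mul, Finset.sum_ite_eq,
    Finset.sum_ite_eq', Finset.mem_univ, if_true, RCLike.star_def]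
  refine Finset.sum_congr rfl fun j _ => ?_
  refine Finset.sum_congr rfl fun k _ => ?_
  rw [← conj_mul_self (M k j)]
  push_cast
  ring

/-- trace of Mᴴ * M * diagonal δ -/
lemma trace_conj_diag_right (M : Matrix n n ℂ) (δ : n → ℝ) :
    (Mᴴ * M * diagonal (fun k => (δ k : ℂ))).trace
      = ((∑ j, ∑ k, δ j * Complex.normSq (M k j) : ℝ) : ℂ) := by
  push_cast
  simp only [Matrix.trace, Matrix.diag_apply, Matrix.mul_apply, Matrix.conjTranspose_apply,
    diagonal_apply, mul_ite, ite_mul, mul_zero, zero_mul, Finset.sum_ite_eq,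
    Finset.sum_ite_eq', Finset.mem_univ, if_true, Finset.sum_mul, RCLike.star_def]
  refine Finset.sum_congr rfl fun j _ => ?_
  refine Finset.sum_congr rfl fun k _ => ?_
  rw [← conj_mul_self (M k j)]
  push_cast
  ring

/-- trace of diagonal δ₁ * K * diagonal δ₂ * Kᴴ -/
lemma trace_diag_K_diag_Kh (K : Matrix n n ℂ) (δ₁ δ₂ : n → ℝ) :
    (diagonal (fun i => (δ₁ i : ℂ)) * K * diagonal (fun k => (δ₂ k : ℂ)) * Kᴴ).trace
      = ((∑ i, ∑ j, δ₁ i * δ₂ j * Complex.normSq (K i j) : ℝ) : ℂ) := by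
  push_cast
  simp only [Matrix.trace, Matrix.diag_apply, Matrix.mul_apply, Matrix.conjTranspose_apply,
    diagonal_apply, mul_ite, ite_mul, mul_zero, zero_mul, Finset.sum_ite_eq,
    Finset.sum_ite_eq', Finset.mem_univ, if_true, Finset.sum_mul, RCLike.star_def]
  refine Finset.sum_congr rfl fun i _ => ?_
  refine Finset.sum_congr rfl fun j _ => ?_
  rw [← conj_mul_self (K i j)]
  push_cast
  ring

lemma sum_smul_vecMulVec (W : Matrix n n ℂ) (δ : n → ℂ) :
    ∑ i, δ i • vecMulVec (fun k => W k i) (star fun k => W k i)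
      = W * diagonal δ * Wᴴ := by
  ext p q
  simp only [Matrix.sum_apply, Matrix.smul_apply, vecMulVec_apply,
    Pi.star_apply, Matrix.mul_apply, Matrix.conjTranspose_apply, diagonal_apply, mul_ite,
    ite_mul, zero_mul, mul_zero, Finset.sum_ite_eq, Finset.sum_ite_eq', Finset.mem_univ,
    if_true, smul_eq_mul, RCLike.star_def]
  refine Finset.sum_congr rfl fun i _ => ?_
  ring

lemma vecMulVec_mulVec_eq (M : Matrix n n ℂ) (v : n → ℂ) :
    vecMulVec (M.mulVec v) (star (M.mulVec v)) = M * vecMulVec v (star v) * Mᴴ := by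
  ext p q
  simp only [vecMulVec_apply, Pi.star_apply, Matrix.mul_apply, Matrix.mulVec,
    dotProduct, Matrix.conjTranspose_apply, RCLike.star_def, map_sum, _root_.map_mul,
    Finset.sum_mul, Finset.mul_sum]
  refine Finset.sum_congr rfl fun i _ => ?_
  refine Finset.sum_congr rfl fun j _ => ?_
  ring

lemma trace_mul_vecMulVec (N : Matrix n n ℂ) (v w : n → ℂ) :
    (N * vecMulVec v (star w)).trace = star w ⬝ᵥ N.mulVec v := by
  simp only [Matrix.trace, Matrix.diag_apply, Matrix.mul_apply, vecMulVec_apply,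
    Pi.star_apply, dotProduct, Matrix.mulVec, Finset.mul_sum, RCLike.star_def]
  refine Finset.sum_congr rfl fun p _ => ?_
  refine Finset.sum_congr rfl fun q _ => ?_
  ring


open Matrix Finset

variable {n : Type*} [Fintype n] [DecidableEq n]

-- (contents of part1, part2 assumed; here standalone for dev: we re-import)
noncomputable def nsq (v : n → ℂ) : ℝ := ∑ i, Complex.normSq (v i)

lemma nsq_nonneg (v : n → ℂ) : 0 ≤ nsq v :=
  Finset.sum_nonneg fun i _ => Complex.normSq_nonneg _

lemma star_dot_self (v : n → ℂ) : star v ⬝ᵥ v = (nsq v : ℂ) := by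
  simp [dotProduct, nsq, Pi.star_apply, Complex.star_def, mul_comm, Complex.mul_conj]

lemma abs_star_dot_le (v u : n → ℂ) :
    ‖star v ⬝ᵥ u‖ ≤ Real.sqrt (nsq v) * Real.sqrt (nsq u) := by
  have h := norm_inner_le_norm (𝕜 := ℂ) (E := EuclideanSpace ℂ n)
    ((WithLp.equiv 2 _).symm v) ((WithLp.equiv 2 _).symm u)
  rw [WithLp.equiv_symm_apply, EuclideanSpace.inner_toLp_toLp, dotProduct_comm] at h
  have hv : ‖(WithLp.equiv 2 (n → ℂ)).symm v‖ = Real.sqrt (nsq v) := by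
    rw [EuclideanSpace.norm_eq]; congr 1; unfold nsq; congr 1; ext i
    rw [Complex.normSq_eq_norm_sq]; rfl
  have hu : ‖(WithLp.equiv 2 (n → ℂ)).symm u‖ = Real.sqrt (nsq u) := by
    rw [EuclideanSpace.norm_eq]; congr 1; unfold nsq; congr 1; ext i
    rw [Complex.normSq_eq_norm_sq]; rfl
  rw [WithLp.equiv_symm_apply] at hv hu
  rw [hv, hu] at h
  exact h

lemma re_star_dot_le (v u : n → ℂ) :
    (star v ⬝ᵥ u).re ≤ Real.sqrt (nsq v) * Real.sqrt (nsq u) :=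
  (Complex.re_le_norm _).trans (abs_star_dot_le v u)

/-- scalar quadratic minimum fact -/
lemma scalar_quad {N P Q κ : ℝ} (hN : 0 ≤ N) (hP : 0 ≤ P) (hQ : 0 ≤ Q) (hκ : 0 < κ)
    (h : N ≤ Real.sqrt N * Real.sqrt P + Real.sqrt N * Real.sqrt Q) :
    κ / (1 + κ) * N ≤ P + κ * Q := by
  rcases eq_or_lt_of_le hN with h0 | hN
  · rw [← h0]; simp [mul_nonneg hκ.le hQ, add_nonneg hP (mul_nonneg hκ.le hQ)]
  set r := Real.sqrt N with hr
  set p := Real.sqrt P with hp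
  set q := Real.sqrt Q with hq
  have hrr : r * r = N := Real.mul_self_sqrt hN.le
  have hpp : p * p = P := Real.mul_self_sqrt hP
  have hqq : q * q = Q := Real.mul_self_sqrt hQ
  have hrpos : 0 < r := Real.sqrt_pos.mpr hN
  have hple : r ≤ p + q := by
    have := h
    nlinarith
  have hp0 : 0 ≤ p := Real.sqrt_nonneg _
  have hq0 : 0 ≤ q := Real.sqrt_nonneg _
  rw [div_mul_eq_mul_div, div_le_iff₀ (by linarith)]
  have h2 : r * r ≤ (p + q) * (p + q) := mul_le_mul hple hple hrpos.le (by linarith)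
  have hkey : κ * N ≤ κ * ((p + q) * (p + q)) := by
    rw [hrr] at h2
    exact mul_le_mul_of_nonneg_left h2 hκ.le
  rw [← hpp, ← hqq]
  nlinarith [sq_nonneg (p - κ * q), hkey]

/-- the per-piece inequality -/
lemma piece_ineq (x y : Matrix n n ℂ) (hxy : x + y = 1) (w : n → ℂ) {κ : ℝ} (hκ : 0 < κ) :
    κ / (1 + κ) * nsq w ≤ nsq (x.mulVec w) + κ * nsq (yᴴ.mulVec w) := by
  apply scalar_quad (nsq_nonneg w) (nsq_nonneg _) (nsq_nonneg _) hκ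
  have hsplit : (nsq w : ℂ) = star w ⬝ᵥ x.mulVec w + star w ⬝ᵥ y.mulVec w := by
    rw [← star_dot_self, ← dotProduct_add, ← Matrix.add_mulVec, hxy, Matrix.one_mulVec]
  have h1 : (star w ⬝ᵥ x.mulVec w).re ≤ Real.sqrt (nsq w) * Real.sqrt (nsq (x.mulVec w)) :=
    re_star_dot_le _ _
  have h2 : (star w ⬝ᵥ y.mulVec w).re ≤ Real.sqrt (nsq w) * Real.sqrt (nsq (yᴴ.mulVec w)) := by
    have hrw : star w ⬝ᵥ y.mulVec w = star (yᴴ.mulVec w) ⬝ᵥ w := by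
      rw [Matrix.star_mulVec, Matrix.conjTranspose_conjTranspose, Matrix.dotProduct_mulVec]
    rw [hrw]
    have := re_star_dot_le (yᴴ.mulVec w) w
    calc (star (yᴴ.mulVec w) ⬝ᵥ w).re ≤ Real.sqrt (nsq (yᴴ.mulVec w)) * Real.sqrt (nsq w) := this
    _ = Real.sqrt (nsq w) * Real.sqrt (nsq (yᴴ.mulVec w)) := mul_comm _ _
  have hre : nsq w = (star w ⬝ᵥ x.mulVec w).re + (star w ⬝ᵥ y.mulVec w).re := by
    have := congrArg Complex.re hsplit
    simpa using this
  calc nsq w = (star w ⬝ᵥ x.mulVec w).re + (star w ⬝ᵥ y.mulVec w).re := hre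
  _ ≤ Real.sqrt (nsq w) * Real.sqrt (nsq (x.mulVec w))
      + Real.sqrt (nsq w) * Real.sqrt (nsq (yᴴ.mulVec w)) := add_le_add h1 h2


lemma star_dot_diag (δ : n → ℝ) (ζ : n → ℂ) :
    star ζ ⬝ᵥ ((diagonal (fun j => (δ j : ℂ))).mulVec ζ)
      = ((∑ j, δ j * Complex.normSq (ζ j) : ℝ) : ℂ) := by
  push_cast
  simp only [dotProduct, Matrix.mulVec, diagonal_apply, ite_mul, mul_ite, zero_mul,
    mul_zero, Finset.sum_ite_eq, Finset.sum_ite_eq', Finset.mem_univ, if_true,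
    Pi.star_apply, RCLike.star_def]
  refine Finset.sum_congr rfl fun j _ => ?_
  rw [mul_left_comm, conj_mul_self (ζ j)]

/-- quadratic form against a unitary-diagonal conjugation -/
lemma quad_diag (U : Matrix n n ℂ) (δ : n → ℝ) (z : n → ℂ) :
    star z ⬝ᵥ ((U * diagonal (fun j => (δ j : ℂ)) * Uᴴ).mulVec z)
      = ((∑ j, δ j * Complex.normSq ((Uᴴ.mulVec z) j) : ℝ) : ℂ) := by
  have hζ : vecMulVec (Uᴴ.mulVec z) (star (Uᴴ.mulVec z)) = Uᴴ * vecMulVec z (star z) * U := by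
    rw [vecMulVec_mulVec_eq Uᴴ z, conjTranspose_conjTranspose]
  calc star z ⬝ᵥ ((U * diagonal (fun j => (δ j : ℂ)) * Uᴴ).mulVec z)
      = (U * diagonal (fun j => (δ j : ℂ)) * Uᴴ * vecMulVec z (star z)).trace :=
        (trace_mul_vecMulVec _ _ _).symm
    _ = ((U * diagonal (fun j => (δ j : ℂ))) * (Uᴴ * vecMulVec z (star z))).trace := by
        rw [mul_assoc]
    _ = ((Uᴴ * vecMulVec z (star z)) * (U * diagonal (fun j => (δ j : ℂ)))).trace :=
        Matrix.trace_mul_comm _ _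
    _ = ((Uᴴ * vecMulVec z (star z) * U) * diagonal (fun j => (δ j : ℂ))).trace := by
        simp only [mul_assoc]
    _ = (diagonal (fun j => (δ j : ℂ)) * vecMulVec (Uᴴ.mulVec z) (star (Uᴴ.mulVec z))).trace := by
        rw [hζ, Matrix.trace_mul_comm]
    _ = star (Uᴴ.mulVec z) ⬝ᵥ ((diagonal (fun j => (δ j : ℂ))).mulVec (Uᴴ.mulVec z)) :=
        trace_mul_vecMulVec _ _ _
    _ = ((∑ j, δ j * Complex.normSq ((Uᴴ.mulVec z) j) : ℝ) : ℂ) := star_dot_diag _ _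

lemma mulVec_col (M W : Matrix n n ℂ) (i j : n) :
    (M.mulVec (fun k => W k i)) j = (M * W) j i := by
  simp [Matrix.mulVec, Matrix.mul_apply, dotProduct]


/-- The key pointwise (in `t`) inequality, via decomposition & Cauchy-Schwarz. -/
lemma pointwise_ineq
    (U V W : Matrix n n ℂ)
    (hU1 : Uᴴ * U = 1) (hU2 : U * Uᴴ = 1)
    (hV1 : Vᴴ * V = 1) (hV2 : V * Vᴴ = 1)
    (hW2 : W * Wᴴ = 1)
    (a b c : n → ℝ) (ha : ∀ j, 0 < a j) (hb : ∀ k, 0 < b k) (hc : ∀ i, 0 < c i)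
    (A B S : Matrix n n ℂ)
    (hAdef : A = U * Matrix.diagonal (fun j => (a j : ℂ)) * Uᴴ)
    (hBdef : B = V * Matrix.diagonal (fun k => (b k : ℂ)) * Vᴴ)
    (hSh : Sᴴ = S) (hSS : S * S = A)
    (hSCS : S * (W * Matrix.diagonal (fun i => (c i : ℂ)) * Wᴴ) * S = B)
    (t : ℝ) (ht : 0 < t) :
    ∑ i, (c i / (c i + t)) * (∑ j, a j * Complex.normSq ((Wᴴ * U) i j))
      ≤ ∑ j, ∑ k, Complex.normSq ((Vᴴ * U) k j) * (a j * b k / (b k + t * a j)) := by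
  set K : Matrix n n ℂ := Vᴴ * U with hK
  have hden : ∀ j k, 0 < t * a j + b k := fun j k => add_pos (mul_pos ht (ha j)) (hb k)
  have hVcancel : ∀ M : Matrix n n ℂ, Vᴴ * (V * M) = M := fun M => by
    rw [← mul_assoc, hV1, one_mul]
  have hUcancel : ∀ M : Matrix n n ℂ, Uᴴ * (U * M) = M := fun M => by
    rw [← mul_assoc, hU1, one_mul]
  set Xc : Matrix n n ℂ :=
    Matrix.of fun k j => ((b k / (t * a j + b k) : ℝ) : ℂ) * K k j with hXc
  set Yc : Matrix n n ℂ :=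
    Matrix.of fun k j => ((t * a j / (t * a j + b k) : ℝ) : ℂ) * K k j with hYc
  set x : Matrix n n ℂ := V * Xc * Uᴴ with hx
  set y : Matrix n n ℂ := V * Yc * Uᴴ with hy
  have hxy : x + y = 1 := by
    have hXYc : Xc + Yc = K := by
      ext k j
      simp only [hXc, hYc, Matrix.add_apply, Matrix.of_apply]
      rw [← add_mul, ← Complex.ofReal_add, ← add_div, add_comm (b k) (t * a j),
        div_self (hden j k).ne']
      simp
    rw [hx, hy, ← add_mul, ← mul_add, hXYc, hK, ← mul_assoc, hV2, one_mul, hU2]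
  -- the vectors w i
  set z : n → n → ℂ := fun i => (fun k => W k i) with hz
  set w : n → n → ℂ := fun i => S.mulVec (z i) with hw
  -- decomposition of A and B
  have hzsum : ∑ i, vecMulVec (z i) (star (z i)) = 1 := by
    have := sum_smul_vecMulVec W (fun _ => (1 : ℂ))
    simpa [Matrix.diagonal_one, hW2] using this
  have hzsumc : ∑ i, (c i : ℂ) • vecMulVec (z i) (star (z i))
      = W * Matrix.diagonal (fun i => (c i : ℂ)) * Wᴴ :=
    sum_smul_vecMulVec W _
  have hwv : ∀ i, vecMulVec (w i) (star (w i)) = S * vecMulVec (z i) (star (z i)) * S := by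
    intro i
    rw [hw, vecMulVec_mulVec_eq, hSh]
  have hsumA : ∑ i, vecMulVec (w i) (star (w i)) = A := by
    calc ∑ i, vecMulVec (w i) (star (w i)) = ∑ i, S * vecMulVec (z i) (star (z i)) * S := by
          exact Finset.sum_congr rfl fun i _ => hwv i
    _ = S * (∑ i, vecMulVec (z i) (star (z i))) * S := by
          rw [← Finset.sum_mul, ← Matrix.mul_sum]
    _ = A := by rw [hzsum, mul_one, hSS]
  have hsumB : ∑ i, (c i : ℂ) • vecMulVec (w i) (star (w i)) = B := by
    calc ∑ i, (c i : ℂ) • vecMulVec (w i) (star (w i))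
        = ∑ i, S * ((c i : ℂ) • vecMulVec (z i) (star (z i))) * S := by
          refine Finset.sum_congr rfl fun i _ => ?_
          rw [hwv i, Matrix.mul_smul, Matrix.smul_mul]
    _ = S * (∑ i, (c i : ℂ) • vecMulVec (z i) (star (z i))) * S := by
          rw [← Finset.sum_mul, ← Matrix.mul_sum]
    _ = B := by rw [hzsumc, hSCS]
  -- trace computations, explicit side
  have hxconj : xᴴ * x * A = U * (Xcᴴ * Xc * Matrix.diagonal (fun j => (a j : ℂ))) * Uᴴ := by
    rw [hx, hAdef]
    simp only [Matrix.conjTranspose_mul, Matrix.conjTranspose_conjTranspose, mul_assoc]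
    rw [hVcancel, hUcancel]
  have hyconj : yᴴ * B * y = U * (Ycᴴ * Matrix.diagonal (fun k => (b k : ℂ)) * Yc) * Uᴴ := by
    rw [hy, hBdef]
    simp only [Matrix.conjTranspose_mul, Matrix.conjTranspose_conjTranspose, mul_assoc]
    rw [hVcancel, hVcancel]
  have htraceU : ∀ M : Matrix n n ℂ, (U * M * Uᴴ).trace = M.trace := by
    intro M
    rw [Matrix.trace_mul_cycle, hU1, one_mul]
  have hXcsq : ∀ k j, Complex.normSq (Xc k j)
      = (b k / (t * a j + b k))^2 * Complex.normSq (K k j) := by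
    intro k j
    rw [hXc]
    simp only [Matrix.of_apply, Complex.normSq_mul, Complex.normSq_ofReal]
    ring
  have hYcsq : ∀ k j, Complex.normSq (Yc k j)
      = (t * a j / (t * a j + b k))^2 * Complex.normSq (K k j) := by
    intro k j
    rw [hYc]
    simp only [Matrix.of_apply, Complex.normSq_mul, Complex.normSq_ofReal]
    ring
  have t1 : (xᴴ * x * A).trace
      = ((∑ j, ∑ k, a j * ((b k / (t * a j + b k))^2 * Complex.normSq (K k j)) : ℝ) : ℂ) := by
    rw [hxconj, htraceU, trace_conj_diag_right]
    congr 1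
    exact Finset.sum_congr rfl fun j _ => Finset.sum_congr rfl fun k _ => by rw [hXcsq k j]
  have t2 : (yᴴ * B * y).trace
      = ((∑ j, ∑ k, b k * ((t * a j / (t * a j + b k))^2 * Complex.normSq (K k j)) : ℝ) : ℂ) := by
    rw [hyconj, htraceU, trace_conj_diag_mid]
    congr 1
    exact Finset.sum_congr rfl fun j _ => Finset.sum_congr rfl fun k _ => by rw [hYcsq k j]
  -- trace computations, decomposition side
  have t3 : (xᴴ * x * A).trace = ((∑ i, nsq (x.mulVec (w i)) : ℝ) : ℂ) := by
    rw [← hsumA, Matrix.mul_sum, Matrix.trace_sum]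
    push_cast
    refine Finset.sum_congr rfl fun i _ => ?_
    rw [trace_mul_vecMulVec]
    rw [← Matrix.mulVec_mulVec, Matrix.dotProduct_mulVec (star (w i)) xᴴ,
      show Matrix.vecMul (star (w i)) xᴴ = star (x.mulVec (w i)) from
        (Matrix.star_mulVec x (w i)).symm, star_dot_self]
  have t4 : (yᴴ * B * y).trace = ((∑ i, c i * nsq (yᴴ.mulVec (w i)) : ℝ) : ℂ) := by
    have hcycle : (yᴴ * B * y).trace = (y * yᴴ * B).trace := by
      rw [Matrix.trace_mul_cycle]
    rw [hcycle, ← hsumB, Matrix.mul_sum, Matrix.trace_sum]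
    push_cast
    refine Finset.sum_congr rfl fun i _ => ?_
    rw [Matrix.mul_smul, Matrix.trace_smul, trace_mul_vecMulVec]
    rw [← Matrix.mulVec_mulVec, Matrix.dotProduct_mulVec (star (w i)) y,
      show Matrix.vecMul (star (w i)) y = star (yᴴ.mulVec (w i)) from by
        rw [Matrix.star_mulVec yᴴ (w i), Matrix.conjTranspose_conjTranspose], star_dot_self]
    simp [smul_eq_mul]
  -- identify nsq (w i) with the g i
  have hg : ∀ i, (nsq (w i) : ℂ) = ((∑ j, a j * Complex.normSq ((Wᴴ * U) i j) : ℝ) : ℂ) := by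
    intro i
    rw [← star_dot_self]
    have e1 : star (w i) ⬝ᵥ w i = star (z i) ⬝ᵥ (A.mulVec (z i)) := by
      show star (S *ᵥ (z i)) ⬝ᵥ (S *ᵥ (z i)) = _
      rw [Matrix.star_mulVec, Matrix.dotProduct_mulVec, Matrix.vecMul_vecMul, hSh, hSS,
        ← Matrix.dotProduct_mulVec]
    rw [e1, hAdef, quad_diag]
    congr 1
    refine Finset.sum_congr rfl fun j _ => ?_
    congr 1
    have e2 : (Uᴴ.mulVec (z i)) j = (Uᴴ * W) j i := mulVec_col Uᴴ W i j
    rw [e2, show Wᴴ * U = (Uᴴ * W)ᴴ from by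
        rw [Matrix.conjTranspose_mul, Matrix.conjTranspose_conjTranspose]]
    simp only [Matrix.conjTranspose_apply, RCLike.star_def, Complex.normSq_conj]
  have hgreal : ∀ i, nsq (w i) = ∑ j, a j * Complex.normSq ((Wᴴ * U) i j) := fun i => by
    exact_mod_cast hg i
  -- extract real equalities
  have hsum1 : ∑ i, nsq (x.mulVec (w i))
      = ∑ j, ∑ k, a j * ((b k / (t * a j + b k))^2 * Complex.normSq (K k j)) := by
    have h := t3.symm.trans t1
    exact_mod_cast h
  have hsum2 : ∑ i, c i * nsq (yᴴ.mulVec (w i))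
      = ∑ j, ∑ k, b k * ((t * a j / (t * a j + b k))^2 * Complex.normSq (K k j)) := by
    have h := t4.symm.trans t2
    exact_mod_cast h
  -- per-i inequality
  have hper : ∀ i, (c i / (c i + t)) * nsq (w i)
      ≤ nsq (x.mulVec (w i)) + (c i / t) * nsq (yᴴ.mulVec (w i)) := by
    intro i
    have hκ : 0 < c i / t := div_pos (hc i) ht
    have hp := piece_ineq x y hxy (w i) hκ
    have hcoef : (c i / t) / (1 + c i / t) = c i / (c i + t) := by
      have hct : 0 < c i + t := add_pos (hc i) ht
      have h2 : 0 < 1 + c i / t := by positivity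
      rw [div_eq_div_iff h2.ne' hct.ne']
      field_simp
      ring
    rwa [hcoef] at hp
  -- main chain
  calc ∑ i, (c i / (c i + t)) * (∑ j, a j * Complex.normSq ((Wᴴ * U) i j))
      = ∑ i, (c i / (c i + t)) * nsq (w i) := by
        exact Finset.sum_congr rfl fun i _ => by rw [hgreal i]
    _ ≤ ∑ i, (nsq (x.mulVec (w i)) + (c i / t) * nsq (yᴴ.mulVec (w i))) :=
        Finset.sum_le_sum fun i _ => hper i
    _ = (∑ i, nsq (x.mulVec (w i))) + (1/t) * ∑ i, c i * nsq (yᴴ.mulVec (w i)) := by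
        rw [Finset.sum_add_distrib, Finset.mul_sum]
        congr 1
        exact Finset.sum_congr rfl fun i _ => by field_simp
    _ = ∑ j, ∑ k, (a j * ((b k / (t * a j + b k))^2 * Complex.normSq (K k j))
          + (1/t) * (b k * ((t * a j / (t * a j + b k))^2 * Complex.normSq (K k j)))) := by
        rw [hsum1, hsum2, Finset.mul_sum, ← Finset.sum_add_distrib]
        refine Finset.sum_congr rfl fun j _ => ?_
        rw [Finset.mul_sum, ← Finset.sum_add_distrib]
    _ = ∑ j, ∑ k, Complex.normSq ((Vᴴ * U) k j) * (a j * b k / (b k + t * a j)) := by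
        refine Finset.sum_congr rfl fun j _ => ?_
        refine Finset.sum_congr rfl fun k _ => ?_
        have h := hden j k
        have h2 : b k + t * a j ≠ 0 := by rw [add_comm]; exact h.ne'
        rw [← hK]
        have h3 := h.ne'
        have h4 := ht.ne'
        rw [show b k + t * a j = t * a j + b k from add_comm _ _]
        linear_combination (a j * b k * Complex.normSq (K k j) * (t * a j + b k)⁻¹) *
          mul_inv_cancel₀ h3 + (a j ^ 2 * b k * Complex.normSq (K k j) * (t * a j + b k)⁻¹ ^ 2 * t) *
          inv_mul_cancel₀ h4

end Helpers2

section IntegralSec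
open MeasureTheory Set Real

variable {s : ℝ}

/-- the Beta-like normalization constant -/
noncomputable def Js (s : ℝ) : ℝ := ∫ t in Ioi (0:ℝ), t ^ (s-1) / (1 + t)

lemma kernel_cont (hs0 : 0 < s) (hs1 : s < 1) (α β : ℝ) (hα : 0 < α) (hβ : 0 < β) :
    ContinuousOn (fun t : ℝ => t ^ (s-1) * (α * β / (β + t * α))) (Ioi (0:ℝ)) := by
  apply ContinuousOn.mul
  · exact fun t ht => (Real.continuousAt_rpow_const t (s-1)
      (Or.inl (ne_of_gt ht))).continuousWithinAt
  · apply ContinuousOn.div continuousOn_const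
    · fun_prop
    · intro t ht
      have : (0:ℝ) < t := ht
      positivity

lemma kernel_nonneg (hs0 : 0 < s) (α β : ℝ) (hα : 0 < α) (hβ : 0 < β) {t : ℝ} (ht : t ∈ Ioi (0:ℝ)) :
    0 ≤ t ^ (s-1) * (α * β / (β + t * α)) := by
  have h1 : (0:ℝ) < t := ht
  positivity

lemma kernel_integrableOn (hs0 : 0 < s) (hs1 : s < 1) (α β : ℝ) (hα : 0 < α) (hβ : 0 < β) :
    IntegrableOn (fun t : ℝ => t ^ (s-1) * (α * β / (β + t * α))) (Ioi (0:ℝ)) := by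
  have hsplit : Ioi (0:ℝ) = Ioc (0:ℝ) 1 ∪ Ioi (1:ℝ) := (Set.Ioc_union_Ioi_eq_Ioi zero_le_one).symm
  rw [hsplit]
  apply IntegrableOn.union
  · -- on Ioc 0 1 : dominate by α * t^(s-1)
    have hbase : IntegrableOn (fun t : ℝ => α * t ^ (s-1)) (Ioc (0:ℝ) 1) := by
      apply Integrable.const_mul
      have h := intervalIntegral.intervalIntegrable_rpow' (a := 0) (b := 1)
        (r := s - 1) (by linarith)
      rwa [intervalIntegrable_iff_integrableOn_Ioc_of_le zero_le_one] at h
    apply Integrable.mono' hbase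
    · exact ((kernel_cont hs0 hs1 α β hα hβ).mono Ioc_subset_Ioi_self).aestronglyMeasurable
        measurableSet_Ioc
    · filter_upwards [ae_restrict_mem measurableSet_Ioc] with t ht
      have ht0 : 0 < t := ht.1
      rw [Real.norm_eq_abs, abs_of_nonneg (kernel_nonneg hs0 α β hα hβ ht0)]
      have h1 : α * β / (β + t * α) ≤ α := by
        rw [div_le_iff₀ (by positivity)]
        nlinarith [mul_nonneg (mul_nonneg hα.le ht0.le) hα.le]
      have h2 : (0:ℝ) ≤ t ^ (s-1) := rpow_nonneg ht0.le _
      calc t ^ (s-1) * (α * β / (β + t * α)) ≤ t ^ (s-1) * α := by nlinarith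
      _ = α * t ^ (s-1) := mul_comm _ _
  · -- on Ioi 1 : dominate by β * t^(s-2)
    have hbase : IntegrableOn (fun t : ℝ => β * t ^ (s-2)) (Ioi (1:ℝ)) := by
      apply Integrable.const_mul
      exact integrableOn_Ioi_rpow_of_lt (by linarith) one_pos
    apply Integrable.mono' hbase
    · exact ((kernel_cont hs0 hs1 α β hα hβ).mono (Ioi_subset_Ioi zero_le_one)
        ).aestronglyMeasurable measurableSet_Ioi
    · filter_upwards [ae_restrict_mem measurableSet_Ioi] with t ht
      have ht1 : (1:ℝ) < t := ht
      have ht0 : (0:ℝ) < t := lt_trans one_pos ht1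
      rw [Real.norm_eq_abs, abs_of_nonneg (kernel_nonneg hs0 α β hα hβ ht0)]
      have h1 : α * β / (β + t * α) ≤ β / t := by
        rw [div_le_div_iff₀ (by positivity) ht0]
        nlinarith
      have h2 : (0:ℝ) ≤ t ^ (s-1) := rpow_nonneg ht0.le _
      calc t ^ (s-1) * (α * β / (β + t * α)) ≤ t ^ (s-1) * (β / t) := by nlinarith
      _ = β * (t ^ (s-1) * t⁻¹) := by ring
      _ = β * t ^ (s-2) := by
          rw [← Real.rpow_neg_one t, ← Real.rpow_add ht0]
          congr 1
          ring

lemma Js_integrable (hs0 : 0 < s) (hs1 : s < 1) :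
    IntegrableOn (fun t : ℝ => t ^ (s-1) / (1 + t)) (Ioi (0:ℝ)) := by
  have h := kernel_integrableOn hs0 hs1 1 1 one_pos one_pos
  simpa [div_eq_mul_inv] using h

lemma kernel_integral (hs0 : 0 < s) (hs1 : s < 1) (α β : ℝ) (hα : 0 < α) (hβ : 0 < β) :
    ∫ t in Ioi (0:ℝ), t ^ (s-1) * (α * β / (β + t * α)) = α ^ (1-s) * β ^ s * Js s := by
  have hr : 0 < β / α := div_pos hβ hα
  have hchange := MeasureTheory.integral_comp_mul_left_Ioi
    (fun u : ℝ => u ^ (s-1) * (α * β / (β + u * α))) 0 hr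
  rw [mul_zero] at hchange
  -- LHS of hchange : ∫ x in Ioi 0, f ((β/α) * x)
  have hiden : ∀ x ∈ Ioi (0:ℝ), (β / α * x) ^ (s-1) * (α * β / (β + (β / α * x) * α))
      = (β / α) ^ (s-1) * (x ^ (s-1) * (α / (1 + x))) := by
    intro x hx
    have hx0 : (0:ℝ) < x := hx
    rw [Real.mul_rpow hr.le hx0.le]
    have hd : β + β / α * x * α = β * (1 + x) := by
      field_simp
    rw [hd]
    have h1x : (0:ℝ) < 1 + x := by linarith
    field_simp
  have heq1 : ∫ x in Ioi (0:ℝ), (β / α * x) ^ (s-1) * (α * β / (β + (β / α * x) * α))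
      = ∫ x in Ioi (0:ℝ), (β / α) ^ (s-1) * (x ^ (s-1) * (α / (1 + x))) :=
    setIntegral_congr_fun measurableSet_Ioi hiden
  rw [heq1] at hchange
  -- now hchange : ∫ (β/α)^(s-1) * (x^(s-1) * (α/(1+x))) = (β/α)⁻¹ • ∫ kernel
  have hJ : ∫ x in Ioi (0:ℝ), (β / α) ^ (s-1) * (x ^ (s-1) * (α / (1 + x)))
      = (β / α) ^ (s-1) * α * Js s := by
    rw [MeasureTheory.integral_const_mul]
    have hid : (fun x : ℝ => x ^ (s-1) * (α / (1 + x)))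
        = fun x : ℝ => α * (x ^ (s-1) / (1 + x)) := funext fun x => by ring
    rw [hid, MeasureTheory.integral_const_mul]
    unfold Js
    ring
  rw [hJ] at hchange
  rw [smul_eq_mul] at hchange
  have hchange' : (β / α) ^ (s - 1) * α * Js s
      = (β / α)⁻¹ * ∫ x in Ioi (0:ℝ), x ^ (s-1) * (α * β / (β + x * α)) := hchange
  have hmain : ∫ t in Ioi (0:ℝ), t ^ (s-1) * (α * β / (β + t * α))
      = (β / α) * ((β / α) ^ (s-1) * α * Js s) := by
    rw [hchange', ← mul_assoc, mul_inv_cancel₀ hr.ne', one_mul]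
  rw [hmain]
  have hrs : (β / α) * (β / α) ^ (s-1) = (β / α) ^ s := by
    nth_rewrite 1 [← Real.rpow_one (β/α)]
    rw [← Real.rpow_add hr]
    norm_num
  calc (β / α) * ((β / α) ^ (s-1) * α * Js s) = ((β / α) * (β / α) ^ (s-1)) * α * Js s := by ring
  _ = (β / α) ^ s * α * Js s := by rw [hrs]
  _ = α ^ (1-s) * β ^ s * Js s := by
      rw [Real.div_rpow hβ.le hα.le]
      rw [Real.rpow_sub hα, Real.rpow_one]
      ring

lemma Js_pos (hs0 : 0 < s) (hs1 : s < 1) : 0 < Js s := by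
  have hsub : Ioc (1:ℝ) 2 ⊆ Ioi (0:ℝ) := fun x hx => lt_trans one_pos hx.1
  have hmeas : MeasurableSet (Ioc (1:ℝ) 2) := measurableSet_Ioc
  have hint : IntegrableOn (fun t : ℝ => t ^ (s-1) / (1 + t)) (Ioc (1:ℝ) 2) :=
    (Js_integrable hs0 hs1).mono_set hsub
  have hlow : ∀ t ∈ Ioc (1:ℝ) 2, (2:ℝ) ^ (s-1) / 3 ≤ t ^ (s-1) / (1 + t) := by
    intro t ht
    have h1 : (1:ℝ) < t := ht.1
    have h2 : t ≤ 2 := ht.2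
    have h3 : (2:ℝ) ^ (s-1) ≤ t ^ (s-1) :=
      Real.rpow_le_rpow_of_nonpos (by linarith) h2 (by linarith)
    have h4 : (0:ℝ) < 1 + t := by linarith
    apply div_le_div₀ (Real.rpow_nonneg (by linarith) _) h3 (by linarith) (by linarith)
  have hstep : (2:ℝ) ^ (s-1) / 3 ≤ ∫ t in Ioc (1:ℝ) 2, t ^ (s-1) / (1 + t) := by
    have hconst : ∫ t in Ioc (1:ℝ) 2, ((2:ℝ) ^ (s-1) / 3) = (2:ℝ) ^ (s-1) / 3 := by
      rw [MeasureTheory.setIntegral_const]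
      simp [Real.volume_Ioc]
      norm_num
    rw [← hconst]
    exact MeasureTheory.setIntegral_mono_on (integrableOn_const (by
      rw [Real.volume_Ioc]; exact ENNReal.ofReal_ne_top)) hint hmeas hlow
  have hpos : (0:ℝ) < (2:ℝ) ^ (s-1) / 3 := by positivity
  have hmono : ∫ t in Ioc (1:ℝ) 2, t ^ (s-1) / (1 + t) ≤ Js s := by
    unfold Js
    apply MeasureTheory.setIntegral_mono_set (Js_integrable hs0 hs1)
    · filter_upwards [ae_restrict_mem measurableSet_Ioi] with t ht
      have ht0 : (0:ℝ) < t := ht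
      positivity
    · exact HasSubset.Subset.eventuallyLE hsub
  calc (0:ℝ) < (2:ℝ) ^ (s-1) / 3 := hpos
  _ ≤ ∫ t in Ioc (1:ℝ) 2, t ^ (s-1) / (1 + t) := hstep
  _ ≤ Js s := hmono

/-- integrate a family of pointwise kernel inequalities into an rpow inequality -/
lemma sum_rpow_le_of_pointwise {ι κ : Type*} [Fintype ι] [Fintype κ]
    (hs0 : 0 < s) (hs1 : s < 1)
    (γ : ι → ℝ) (α β : ι → ℝ) (δ : κ → ℝ) (α' β' : κ → ℝ)
    (hγ : ∀ i, 0 ≤ γ i) (hα : ∀ i, 0 < α i) (hβ : ∀ i, 0 < β i)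
    (hδ : ∀ j, 0 ≤ δ j) (hα' : ∀ j, 0 < α' j) (hβ' : ∀ j, 0 < β' j)
    (H : ∀ t : ℝ, 0 < t →
      ∑ i, γ i * (α i * β i / (β i + t * α i))
        ≤ ∑ j, δ j * (α' j * β' j / (β' j + t * α' j))) :
    ∑ i, γ i * ((α i) ^ (1-s) * (β i) ^ s)
      ≤ ∑ j, δ j * ((α' j) ^ (1-s) * (β' j) ^ s) := by
  have hJ : 0 < Js s := Js_pos hs0 hs1
  rw [← mul_le_mul_iff_left₀ hJ]
  have hL : (∑ i, γ i * ((α i) ^ (1-s) * (β i) ^ s)) * Js s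
      = ∫ t in Ioi (0:ℝ), ∑ i, γ i * (t ^ (s-1) * (α i * β i / (β i + t * α i))) := by
    rw [MeasureTheory.integral_finset_sum]
    · rw [Finset.sum_mul]
      refine Finset.sum_congr rfl fun i _ => ?_
      rw [MeasureTheory.integral_const_mul, kernel_integral hs0 hs1 _ _ (hα i) (hβ i)]
      ring
    · intro i _
      exact (Integrable.const_mul (kernel_integrableOn hs0 hs1 _ _ (hα i) (hβ i)) (γ i))
  have hR : (∑ j, δ j * ((α' j) ^ (1-s) * (β' j) ^ s)) * Js s
      = ∫ t in Ioi (0:ℝ), ∑ j, δ j * (t ^ (s-1) * (α' j * β' j / (β' j + t * α' j))) := by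
    rw [MeasureTheory.integral_finset_sum]
    · rw [Finset.sum_mul]
      refine Finset.sum_congr rfl fun j _ => ?_
      rw [MeasureTheory.integral_const_mul, kernel_integral hs0 hs1 _ _ (hα' j) (hβ' j)]
      ring
    · intro j _
      exact (Integrable.const_mul (kernel_integrableOn hs0 hs1 _ _ (hα' j) (hβ' j)) (δ j))
  rw [hL, hR]
  apply MeasureTheory.setIntegral_mono_on
  · exact MeasureTheory.integrable_finset_sum _ fun i _ =>
      (Integrable.const_mul (kernel_integrableOn hs0 hs1 _ _ (hα i) (hβ i)) (γ i))
  · exact MeasureTheory.integrable_finset_sum _ fun j _ =>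
      (Integrable.const_mul (kernel_integrableOn hs0 hs1 _ _ (hα' j) (hβ' j)) (δ j))
  · exact measurableSet_Ioi
  · intro t ht
    have ht0 : (0:ℝ) < t := ht
    have h0 : (0:ℝ) ≤ t ^ (s-1) := Real.rpow_nonneg ht0.le _
    calc ∑ i, γ i * (t ^ (s-1) * (α i * β i / (β i + t * α i)))
        = t ^ (s-1) * ∑ i, γ i * (α i * β i / (β i + t * α i)) := by
          rw [Finset.mul_sum]
          exact Finset.sum_congr rfl fun i _ => by ring
    _ ≤ t ^ (s-1) * ∑ j, δ j * (α' j * β' j / (β' j + t * α' j)) :=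
          mul_le_mul_of_nonneg_left (H t ht0) h0
    _ = ∑ j, δ j * (t ^ (s-1) * (α' j * β' j / (β' j + t * α' j))) := by
          rw [Finset.mul_sum]
          exact Finset.sum_congr rfl fun j _ => by ring

end IntegralSec

section TraceHelp
open Matrix

variable {n : Type*} [Fintype n] [DecidableEq n]

lemma trace_UDU_mul_UDU (Wm Um : Matrix n n ℂ)
    (hW1 : Wmᴴ * Wm = 1) (hW2 : Wm * Wmᴴ = 1) (δ₁ δ₂ : n → ℝ) :
    (Wm * Matrix.diagonal (fun i => (δ₁ i : ℂ)) * Wmᴴ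
      * (Um * Matrix.diagonal (fun k => (δ₂ k : ℂ)) * Umᴴ)).trace
      = ((∑ i, ∑ j, δ₁ i * δ₂ j * Complex.normSq ((Wmᴴ * Um) i j) : ℝ) : ℂ) := by
  have hmat : Wm * Matrix.diagonal (fun i => (δ₁ i : ℂ)) * Wmᴴ
      * (Um * Matrix.diagonal (fun k => (δ₂ k : ℂ)) * Umᴴ) * (Wm * Wmᴴ)
      = Wm * (Matrix.diagonal (fun i => (δ₁ i : ℂ)) * (Wmᴴ * Um)
        * Matrix.diagonal (fun k => (δ₂ k : ℂ)) * (Wmᴴ * Um)ᴴ) * Wmᴴ := by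
    simp only [Matrix.conjTranspose_mul, Matrix.conjTranspose_conjTranspose, mul_assoc]
  have h0 : Wm * Matrix.diagonal (fun i => (δ₁ i : ℂ)) * Wmᴴ
      * (Um * Matrix.diagonal (fun k => (δ₂ k : ℂ)) * Umᴴ)
      = Wm * (Matrix.diagonal (fun i => (δ₁ i : ℂ)) * (Wmᴴ * Um)
        * Matrix.diagonal (fun k => (δ₂ k : ℂ)) * (Wmᴴ * Um)ᴴ) * Wmᴴ := by
    rw [← hmat, hW2, mul_one]
  rw [h0, Matrix.trace_mul_cycle, ← mul_assoc, hW1, one_mul, trace_diag_K_diag_Kh]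

end TraceHelp

section MpowHelp
open Matrix

lemma UDU_mul {n : Type*} [Fintype n] [DecidableEq n] (Um : Matrix n n ℂ)
    (hU1 : Umᴴ * Um = 1) (f g : n → ℝ) :
    (Um * diagonal (fun j => ((f j : ℝ) : ℂ)) * Umᴴ)
      * (Um * diagonal (fun j => ((g j : ℝ) : ℂ)) * Umᴴ)
      = Um * diagonal (fun j => ((f j * g j : ℝ) : ℂ)) * Umᴴ := by
  have hc : ∀ M : Matrix n n ℂ, Umᴴ * (Um * M) = M := fun M => by
    rw [← mul_assoc, hU1, one_mul]
  calc (Um * diagonal (fun j => ((f j : ℝ) : ℂ)) * Umᴴ)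
      * (Um * diagonal (fun j => ((g j : ℝ) : ℂ)) * Umᴴ)
      = Um * (diagonal (fun j => ((f j : ℝ) : ℂ))
          * (Umᴴ * (Um * (diagonal (fun j => ((g j : ℝ) : ℂ)) * Umᴴ)))) := by
        simp only [mul_assoc]
  _ = Um * (diagonal (fun j => ((f j : ℝ) : ℂ)) * (diagonal (fun j => ((g j : ℝ) : ℂ)) * Umᴴ)) := by
        rw [hc]
  _ = Um * diagonal (fun j => ((f j * g j : ℝ) : ℂ)) * Umᴴ := by
        rw [← mul_assoc (diagonal fun j => ((f j : ℝ) : ℂ)) (diagonal fun j => ((g j : ℝ) : ℂ)) Umᴴ,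
          Matrix.diagonal_mul_diagonal, ← mul_assoc]
        norm_cast

lemma UDU_herm {n : Type*} [Fintype n] [DecidableEq n] (Um : Matrix n n ℂ) (f : n → ℝ) :
    (Um * diagonal (fun j => ((f j : ℝ) : ℂ)) * Umᴴ)ᴴ
      = Um * diagonal (fun j => ((f j : ℝ) : ℂ)) * Umᴴ := by
  rw [Matrix.conjTranspose_mul, Matrix.conjTranspose_mul, Matrix.conjTranspose_conjTranspose,
    Matrix.diagonal_conjTranspose,
    show (star fun j => ((f j : ℝ) : ℂ)) = fun j => ((f j : ℝ) : ℂ) from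
      funext fun j => by simp [Pi.star_apply, RCLike.star_def, Complex.conj_ofReal],
    ← mul_assoc]

/-- eigendata package for a positive definite matrix -/
lemma posdef_data {d : ℕ} {A : Matrix (Fin d) (Fin d) ℂ} (hA : A.PosDef) :
    ∃ (U : Matrix (Fin d) (Fin d) ℂ) (a : Fin d → ℝ),
      Uᴴ * U = 1 ∧ U * Uᴴ = 1 ∧ (∀ j, 0 < a j)
      ∧ A = U * Matrix.diagonal (fun j => ((a j : ℝ) : ℂ)) * Uᴴ
      ∧ (∀ r : ℝ, mpow A r = U * Matrix.diagonal (fun j => ((a j ^ r : ℝ) : ℂ)) * Uᴴ) := by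
  have hAh := hA.1
  refine ⟨hAh.eigenvectorUnitary, hAh.eigenvalues, ?_, ?_, hA.eigenvalues_pos, ?_, ?_⟩
  · exact Matrix.mem_unitaryGroup_iff'.mp (hAh.eigenvectorUnitary).2
  · exact Matrix.mem_unitaryGroup_iff.mp (hAh.eigenvectorUnitary).2
  · exact hAh.spectral_theorem
  · intro r
    unfold mpow
    rw [hAh.cfc_eq]
    rfl

end MpowHelp

theorem trace_gm_le {d : ℕ} (A B : Matrix (Fin d) (Fin d) ℂ)
    (hA : A.PosDef) (hB : B.PosDef) (s : ℝ) (hs : s ∈ Set.Icc (0 : ℝ) 1) :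
    (gm s A B).trace ≤ (mpow A ((1 - s) / 2) * mpow B s * mpow A ((1 - s) / 2)).trace := by
  open Matrix in
  obtain ⟨hs0, hs1⟩ := hs
  obtain ⟨U, a, hU1, hU2, ha, hAspec, hmpA⟩ := posdef_data hA
  obtain ⟨V, b, hV1, hV2, hb, hBspec, hmpB⟩ := posdef_data hB
  -- basic products of powers of A
  have hS2 : mpow A (1/2) * mpow A (1/2) = A := by
    rw [hmpA, UDU_mul U hU1]
    have he : (fun j => ((a j ^ ((1:ℝ)/2) * a j ^ ((1:ℝ)/2) : ℝ) : ℂ))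
        = fun j => ((a j : ℝ) : ℂ) := by
      funext j
      rw [← Real.rpow_add (ha j)]
      norm_num
    rw [he, ← hAspec]
  have hSS' : mpow A (1/2) * mpow A (-(1/2)) = 1 := by
    rw [hmpA, hmpA, UDU_mul U hU1]
    have he : (fun j => ((a j ^ ((1:ℝ)/2) * a j ^ (-(1/2):ℝ) : ℝ) : ℂ)) = fun _ => (1:ℂ) := by
      funext j
      rw [← Real.rpow_add (ha j)]
      norm_num
    rw [he, show Matrix.diagonal (fun _ : Fin d => (1:ℂ)) = 1 from Matrix.diagonal_one,
      mul_one, hU2]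
  have hS'S : mpow A (-(1/2)) * mpow A (1/2) = 1 := by
    rw [hmpA, hmpA, UDU_mul U hU1]
    have he : (fun j => ((a j ^ (-(1/2):ℝ) * a j ^ ((1:ℝ)/2) : ℝ) : ℂ)) = fun _ => (1:ℂ) := by
      funext j
      rw [← Real.rpow_add (ha j)]
      norm_num
    rw [he, show Matrix.diagonal (fun _ : Fin d => (1:ℂ)) = 1 from Matrix.diagonal_one,
      mul_one, hU2]
  have hSh : (mpow A (1/2))ᴴ = mpow A (1/2) := by rw [hmpA]; exact UDU_herm U _
  have hS'h : (mpow A (-(1/2)))ᴴ = mpow A (-(1/2)) := by rw [hmpA]; exact UDU_herm U _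
  -- C
  set C : Matrix (Fin d) (Fin d) ℂ := mpow A (-(1/2)) * B * mpow A (-(1/2)) with hCdef
  have hCposdef : C.PosDef := by
    rw [Matrix.posDef_iff_dotProduct_mulVec]
    constructor
    · show Cᴴ = C
      rw [hCdef]
      calc (mpow A (-(1/2)) * B * mpow A (-(1/2)))ᴴ
          = (mpow A (-(1/2)))ᴴ * ((mpow A (-(1/2)) * B)ᴴ) := Matrix.conjTranspose_mul _ _
      _ = (mpow A (-(1/2)))ᴴ * (Bᴴ * (mpow A (-(1/2)))ᴴ) := by rw [Matrix.conjTranspose_mul]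
      _ = mpow A (-(1/2)) * B * mpow A (-(1/2)) := by rw [hS'h, hB.1.eq, ← mul_assoc]
    · intro x hx
      have hS'x : (mpow A (-(1/2))).mulVec x ≠ 0 := by
        intro h0
        apply hx
        have h1 : (mpow A (1/2) * mpow A (-(1/2))).mulVec x = x := by
          rw [hSS', Matrix.one_mulVec]
        rw [← h1, ← Matrix.mulVec_mulVec, h0, Matrix.mulVec_zero]
      have hvm : Matrix.vecMul (star x) (mpow A (-(1/2)))
          = star ((mpow A (-(1/2))).mulVec x) := by
        rw [Matrix.star_mulVec, hS'h]
      have hquad : dotProduct (star x) (C.mulVec x)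
          = dotProduct (star ((mpow A (-(1/2))).mulVec x))
              (B.mulVec ((mpow A (-(1/2))).mulVec x)) := by
        rw [hCdef, ← Matrix.mulVec_mulVec, ← Matrix.mulVec_mulVec,
          Matrix.dotProduct_mulVec, hvm, Matrix.dotProduct_mulVec, Matrix.dotProduct_mulVec]
      rw [hquad]
      exact hB.dotProduct_mulVec_pos hS'x
  obtain ⟨W, c, hW1, hW2, hc, hCspec, hmpC⟩ := posdef_data hCposdef
  have hSCS : mpow A (1/2) * C * mpow A (1/2) = B := by
    rw [hCdef]
    calc mpow A (1/2) * (mpow A (-(1/2)) * B * mpow A (-(1/2))) * mpow A (1/2)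
        = (mpow A (1/2) * mpow A (-(1/2))) * B * (mpow A (-(1/2)) * mpow A (1/2)) := by
          simp only [mul_assoc]
    _ = B := by rw [hSS', hS'S, one_mul, mul_one]
  have hgm : gm s A B = mpow A (1/2) * mpow C s * mpow A (1/2) := by
    rw [gm, hCdef]
  -- endpoint cases
  rcases eq_or_lt_of_le hs0 with h0 | hs0'
  · -- s = 0
    have hCsa : IsSelfAdjoint C := hCposdef.1
    have hBsa : IsSelfAdjoint B := hB.1
    have hpow0 : (fun x : ℝ => x ^ (0:ℝ)) = (1 : ℝ → ℝ) := funext fun x => Real.rpow_zero x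
    have hmpC0 : mpow C 0 = 1 := by unfold mpow; rw [hpow0]; exact cfc_one ℝ C
    have hmpB0 : mpow B 0 = 1 := by unfold mpow; rw [hpow0]; exact cfc_one ℝ B
    subst h0
    rw [hgm, hmpC0, mul_one, hS2]
    rw [show ((1:ℝ) - 0) / 2 = 1/2 from by norm_num, hmpB0, mul_one, hS2]
  rcases eq_or_lt_of_le hs1 with h1 | hs1'
  · -- s = 1
    have hCsa : IsSelfAdjoint C := hCposdef.1
    have hAsa : IsSelfAdjoint A := hA.1
    have hBsa : IsSelfAdjoint B := hB.1
    have hpow1 : (fun x : ℝ => x ^ (1:ℝ)) = (id : ℝ → ℝ) := funext fun x => Real.rpow_one x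
    have hpow0 : (fun x : ℝ => x ^ (0:ℝ)) = (1 : ℝ → ℝ) := funext fun x => Real.rpow_zero x
    have hmpC1 : mpow C 1 = C := by unfold mpow; rw [hpow1]; exact cfc_id ℝ C hCsa
    have hmpB1 : mpow B 1 = B := by unfold mpow; rw [hpow1]; exact cfc_id ℝ B hBsa
    have hmpA0 : mpow A 0 = 1 := by unfold mpow; rw [hpow0]; exact cfc_one ℝ A
    subst h1
    rw [hgm, hmpC1, hSCS]
    rw [show ((1:ℝ) - 1) / 2 = 0 from by norm_num, hmpA0, one_mul, mul_one, hmpB1]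
  -- main case : 0 < s < 1
  have hSCS2 : mpow A (1/2) * (W * Matrix.diagonal (fun i => ((c i : ℝ) : ℂ)) * Wᴴ)
      * mpow A (1/2) = B := by
    rw [← hCspec]
    exact hSCS
  -- trace of the lhs
  have hgmtrace : (gm s A B).trace
      = ((∑ i, ∑ j, (c i ^ s) * a j * Complex.normSq ((Wᴴ * U) i j) : ℝ) : ℂ) := by
    rw [hgm, hmpC s, Matrix.trace_mul_cycle,
      show mpow A (1/2) * mpow A (1/2)
          * (W * Matrix.diagonal (fun i => ((c i ^ s : ℝ) : ℂ)) * Wᴴ)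
        = A * (W * Matrix.diagonal (fun i => ((c i ^ s : ℝ) : ℂ)) * Wᴴ) from by rw [hS2],
      Matrix.trace_mul_comm, hAspec]
    exact trace_UDU_mul_UDU W U hW1 hW2 _ _
  -- trace of the rhs
  have hRtrace : (mpow A ((1 - s) / 2) * mpow B s * mpow A ((1 - s) / 2)).trace
      = ((∑ j, ∑ k, (a j ^ (1 - s)) * (b k ^ s) * Complex.normSq ((Uᴴ * V) j k) : ℝ) : ℂ) := by
    rw [Matrix.trace_mul_cycle, hmpA ((1-s)/2), hmpB s, UDU_mul U hU1]
    have hexp : (fun j => ((a j ^ ((1-s)/2) * a j ^ ((1-s)/2) : ℝ) : ℂ))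
        = fun j => ((a j ^ (1 - s) : ℝ) : ℂ) := by
      funext j
      rw [← Real.rpow_add (ha j), show (1-s)/2 + (1-s)/2 = 1 - s from by ring]
    rw [hexp]
    exact trace_UDU_mul_UDU U V hU1 hU2 _ _
  rw [hgmtrace, hRtrace, Complex.real_le_real]
  -- the real inequality via integration of the pointwise inequality
  have hsym : ∀ j k, Complex.normSq ((Vᴴ * U) k j) = Complex.normSq ((Uᴴ * V) j k) := by
    intro j k
    rw [show Vᴴ * U = (Uᴴ * V)ᴴ from by
      rw [Matrix.conjTranspose_mul, Matrix.conjTranspose_conjTranspose]]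
    simp [Matrix.conjTranspose_apply, RCLike.star_def, Complex.normSq_conj]
  have key := sum_rpow_le_of_pointwise (ι := Fin d) (κ := Fin d × Fin d) hs0' hs1'
    (fun i => ∑ j, a j * Complex.normSq ((Wᴴ * U) i j))
    (fun _ => 1) c
    (fun p => Complex.normSq ((Vᴴ * U) p.2 p.1))
    (fun p => a p.1) (fun p => b p.2)
    (fun i => Finset.sum_nonneg fun j _ => mul_nonneg (ha j).le (Complex.normSq_nonneg _))
    (fun _ => one_pos) hc (fun p => Complex.normSq_nonneg _) (fun p => ha p.1) (fun p => hb p.2)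
    (by
      intro t ht
      have hp := pointwise_ineq U V W hU1 hU2 hV1 hV2 hW2 a b c ha hb hc A B (mpow A (1/2))
        hAspec hBspec hSh hS2 hSCS2 t ht
      calc ∑ i, (∑ j, a j * Complex.normSq ((Wᴴ * U) i j)) * (1 * c i / (c i + t * 1))
          = ∑ i, (c i / (c i + t)) * (∑ j, a j * Complex.normSq ((Wᴴ * U) i j)) := by
            refine Finset.sum_congr rfl fun i _ => ?_
            rw [one_mul, mul_one, mul_comm]
      _ ≤ ∑ j, ∑ k, Complex.normSq ((Vᴴ * U) k j) * (a j * b k / (b k + t * a j)) := hp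
      _ = ∑ p : Fin d × Fin d,
            Complex.normSq ((Vᴴ * U) p.2 p.1) * (a p.1 * b p.2 / (b p.2 + t * a p.1)) := by
            rw [Fintype.sum_prod_type])
  calc ∑ i, ∑ j, (c i ^ s) * a j * Complex.normSq ((Wᴴ * U) i j)
      = ∑ i, (∑ j, a j * Complex.normSq ((Wᴴ * U) i j)) * ((1:ℝ) ^ (1-s) * c i ^ s) := by
        refine Finset.sum_congr rfl fun i _ => ?_
        rw [Real.one_rpow, one_mul, Finset.sum_mul]
        exact Finset.sum_congr rfl fun j _ => by ring
  _ ≤ ∑ p : Fin d × Fin d,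
        Complex.normSq ((Vᴴ * U) p.2 p.1) * (a p.1 ^ (1-s) * b p.2 ^ s) := key
  _ = ∑ j, ∑ k, (a j ^ (1 - s)) * (b k ^ s) * Complex.normSq ((Uᴴ * V) j k) := by
        rw [Fintype.sum_prod_type]
        refine Finset.sum_congr rfl fun j _ => Finset.sum_congr rfl fun k _ => ?_
        rw [hsym j k]
        ring
end

section
/- Log-majorization implies weak majorization: for vectors x, y of positive reals, if log x ≺_w log y (entrywise logarithm, weak majorization) and the full sums of log x and log y of the k largest entries satisfy the log-majorization conditions, then x ≺_w y. -/
open scoped ComplexOrder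

private lemma filter_sum_eq_range {d : ℕ} {m : ℕ} (hm : m ≤ d) (f : Fin d → ℝ) :
    ∑ j ∈ Finset.univ.filter (fun j : Fin d => (j : ℕ) < m), f j
      = ∑ n ∈ Finset.range m, (if h : n < d then f ⟨n, h⟩ else 0) := by
  refine Finset.sum_bij' (fun (j : Fin d) _ => (j : ℕ))
    (fun n hn => (⟨n, lt_of_lt_of_le (Finset.mem_range.mp hn) hm⟩ : Fin d)) ?_ ?_ ?_ ?_ ?_
  · intro j hj; simp only [Finset.mem_filter, Finset.mem_univ, true_and] at hj
    exact Finset.mem_range.mpr hj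
  · intro n hn; simp [Finset.mem_range.mp hn]
  · intro j hj; simp
  · intro n hn; simp
  · intro j hj; simp [j.isLt]

theorem log_majorization_implies_weak_majorization {d : ℕ} (x y : Fin d → ℝ)
    (hx : ∀ i, 0 < x i) (hy : ∀ i, 0 < y i)
    (hxs : Antitone x) (hys : Antitone y)
    (hmaj : ∀ k : ℕ, k ≤ d →
      ∑ j ∈ Finset.univ.filter (fun j : Fin d => (j : ℕ) < k), Real.log (x j)
      ≤ ∑ j ∈ Finset.univ.filter (fun j : Fin d => (j : ℕ) < k), Real.log (y j)) :
    ∀ k : ℕ, k ≤ d → ∑ j ∈ Finset.univ.filter (fun j : Fin d => (j : ℕ) < k), x j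
      ≤ ∑ j ∈ Finset.univ.filter (fun j : Fin d => (j : ℕ) < k), y j := by
  intro k hk
  set X : ℕ → ℝ := fun n => if h : n < d then x ⟨n, h⟩ else 0 with hX
  set Y : ℕ → ℝ := fun n => if h : n < d then y ⟨n, h⟩ else 0 with hY
  set c : ℕ → ℝ := fun n => if h : n < d then Real.log (x ⟨n, h⟩) - Real.log (y ⟨n, h⟩) else 0
    with hc
  have hXnonneg : ∀ n, 0 ≤ X n := by
    intro n; by_cases h : n < d <;> simp [hX, h, (hx _).le]
  have hXanti : Antitone X := by
    intro m n hmn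
    by_cases h : n < d
    · have hm : m < d := lt_of_le_of_lt hmn h
      simp only [hX, dif_pos h, dif_pos hm]
      exact hxs (by exact_mod_cast hmn)
    · simp only [hX, dif_neg h]; exact hXnonneg m
  -- partial sums of c are ≤ 0
  have hS : ∀ m, m ≤ d → ∑ n ∈ Finset.range m, c n ≤ 0 := by
    intro m hm
    have h1 := hmaj m hm
    rw [filter_sum_eq_range hm (fun j => Real.log (x j)),
        filter_sum_eq_range hm (fun j => Real.log (y j))] at h1
    have : ∑ n ∈ Finset.range m, c n
        = (∑ n ∈ Finset.range m, (if h : n < d then Real.log (x ⟨n, h⟩) else 0))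
          - ∑ n ∈ Finset.range m, (if h : n < d then Real.log (y ⟨n, h⟩) else 0) := by
      rw [← Finset.sum_sub_distrib]
      refine Finset.sum_congr rfl fun n hn => ?_
      have hnd : n < d := lt_of_lt_of_le (Finset.mem_range.mp hn) hm
      simp [hc, hnd]
    rw [this]; linarith
  -- key pointwise convexity bound
  have hkey : ∀ n, n < d → X n - Y n ≤ X n * c n := by
    intro n hn
    simp only [hX, hY, hc, dif_pos hn]
    set A := Real.log (x ⟨n, hn⟩)
    set B := Real.log (y ⟨n, hn⟩)
    have hxA : x ⟨n, hn⟩ = Real.exp A := (Real.exp_log (hx _)).symm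
    have hyB : y ⟨n, hn⟩ = Real.exp B := (Real.exp_log (hy _)).symm
    have h1 : B - A + 1 ≤ Real.exp (B - A) := Real.add_one_le_exp _
    have h2 : Real.exp A * (B - A + 1) ≤ Real.exp A * Real.exp (B - A) :=
      mul_le_mul_of_nonneg_left h1 (Real.exp_pos A).le
    rw [← Real.exp_add, add_sub_cancel] at h2
    rw [hxA, hyB]; nlinarith
  -- Abel summation bound
  have habel : ∑ n ∈ Finset.range k, X n * c n ≤ 0 := by
    have := Finset.sum_range_by_parts X c k
    simp only [smul_eq_mul] at this
    rw [this]
    have h1 : X (k - 1) * ∑ i ∈ Finset.range k, c i ≤ 0 :=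
      mul_nonpos_of_nonneg_of_nonpos (hXnonneg _) (hS k hk)
    have h2 : (0:ℝ) ≤ ∑ i ∈ Finset.range (k - 1), (X (i + 1) - X i) * ∑ j ∈ Finset.range (i + 1), c j := by
      refine Finset.sum_nonneg fun i hi => ?_
      have hik : i + 1 ≤ d := by
        have := Finset.mem_range.mp hi
        omega
      exact mul_nonneg_of_nonpos_of_nonpos (by linarith [hXanti (Nat.le_succ i)])
        (hS (i + 1) hik)
    linarith
  -- conclude
  rw [filter_sum_eq_range hk x, filter_sum_eq_range hk y]
  have hsum : ∑ n ∈ Finset.range k, (X n - Y n) ≤ ∑ n ∈ Finset.range k, X n * c n :=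
    Finset.sum_le_sum fun n hn => hkey n (lt_of_lt_of_le (Finset.mem_range.mp hn) hk)
  rw [Finset.sum_sub_distrib] at hsum
  have : ∑ n ∈ Finset.range k, X n - ∑ n ∈ Finset.range k, Y n ≤ 0 := le_trans hsum habel
  simpa [hX, hY] using by linarith
end

section
/- Matrix Hölder inequality: for positive semi-definite matrices A, B and θ ∈ (0,1), Tr(AB) ≤ (Tr(A^(1/θ)))^θ · (Tr(B^(1/(1−θ))))^(1−θ). -/
open scoped ComplexOrder

open Matrix Finset in
lemma trace_cfc_re' {d : ℕ} {A : Matrix (Fin d) (Fin d) ℂ} (hA : A.IsHermitian) (f : ℝ → ℝ) :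
    (cfc f A).trace.re = ∑ i, f (hA.eigenvalues i) := by
  rw [hA.cfc_eq, Matrix.IsHermitian.cfc, Unitary.conjStarAlgAut_apply, Matrix.trace_mul_cycle,
    (Matrix.mem_unitaryGroup_iff').mp (Matrix.IsHermitian.eigenvectorUnitary hA).2, one_mul,
    Matrix.trace_diagonal]
  simp [Complex.re_sum]

open Matrix Finset in
lemma trace_diag' {d : ℕ} (a b : Fin d → ℂ) (W : Matrix (Fin d) (Fin d) ℂ) :
    (diagonal a * W * diagonal b * star W).trace
      = ∑ i, ∑ j, a i * b j * (W i j * star (W i j)) := by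
  simp only [Matrix.trace, Matrix.diag_apply, Matrix.mul_apply, Matrix.diagonal_apply,
    Matrix.star_apply, ite_mul, zero_mul, Finset.sum_ite_eq, Finset.mem_univ, if_true,
    mul_ite, mul_zero, Finset.sum_ite_eq', Finset.sum_mul]
  refine Finset.sum_congr rfl fun i _ => Finset.sum_congr rfl fun j _ => ?_
  ring

open Matrix Finset in
lemma trace_mul_re' {d : ℕ} (A B : Matrix (Fin d) (Fin d) ℂ) (hA : A.IsHermitian)
    (hB : B.IsHermitian) :
    (A * B).trace.re = ∑ i, ∑ j, hA.eigenvalues i * hB.eigenvalues j *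
      Complex.normSq ((star (hA.eigenvectorUnitary : Matrix (Fin d) (Fin d) ℂ)
        * (hB.eigenvectorUnitary : Matrix (Fin d) (Fin d) ℂ)) i j) := by
  set U := (hA.eigenvectorUnitary : Matrix (Fin d) (Fin d) ℂ)
  set V := (hB.eigenvectorUnitary : Matrix (Fin d) (Fin d) ℂ)
  set Da := diagonal ((RCLike.ofReal ∘ hA.eigenvalues : Fin d → ℂ)) with hDa
  set Db := diagonal ((RCLike.ofReal ∘ hB.eigenvalues : Fin d → ℂ)) with hDb
  set W := star U * V with hW
  have h1 : (A * B).trace = (Da * W * Db * star W).trace := by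
    conv_lhs => rw [hA.spectral_theorem, hB.spectral_theorem, Unitary.conjStarAlgAut_apply,
      Unitary.conjStarAlgAut_apply]
    rw [show (U * Da * star U) * (V * Db * star V) = U * (Da * star U * V * Db * star V) by
      simp only [Matrix.mul_assoc], Matrix.trace_mul_comm]
    congr 1
    simp only [hW, Matrix.mul_assoc, StarMul.star_mul, star_star]
  rw [h1, trace_diag', Complex.re_sum]
  refine Finset.sum_congr rfl fun i _ => ?_
  rw [Complex.re_sum]
  refine Finset.sum_congr rfl fun j _ => ?_
  rw [Complex.star_def, Complex.mul_conj]
  simp [Function.comp, Complex.ofReal_mul]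

open Matrix Finset in
theorem matrix_holder {d : ℕ} (A B : Matrix (Fin d) (Fin d) ℂ)
    (hA : A.PosSemidef) (hB : B.PosSemidef) (θ : ℝ) (hθ : θ ∈ Set.Ioo (0 : ℝ) 1) :
    (A * B).trace.re ≤ (mpow A (1 / θ)).trace.re ^ θ * (mpow B (1 / (1 - θ))).trace.re ^ (1 - θ) := by
  obtain ⟨hθ0, hθ1⟩ := hθ
  have hθ1' : (0:ℝ) < 1 - θ := by linarith
  set U := (hA.1.eigenvectorUnitary : Matrix (Fin d) (Fin d) ℂ) with hU
  set V := (hB.1.eigenvectorUnitary : Matrix (Fin d) (Fin d) ℂ) with hV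
  set W := star U * V with hWdef
  set lam := hA.1.eigenvalues with hlam
  set mu := hB.1.eigenvalues with hmu
  have hlam0 : ∀ i, 0 ≤ lam i := fun i => hA.eigenvalues_nonneg i
  have hmu0 : ∀ i, 0 ≤ mu i := fun i => hB.eigenvalues_nonneg i
  set p : Fin d → Fin d → ℝ := fun i j => Complex.normSq (W i j) with hp
  have hp0 : ∀ i j, 0 ≤ p i j := fun i j => Complex.normSq_nonneg _
  -- unitarity of W
  have hWW : W * star W = 1 := by
    rw [hWdef, StarMul.star_mul, star_star, show star U * V * (star V * U)
        = star U * (V * star V) * U by simp only [Matrix.mul_assoc],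
      (Matrix.mem_unitaryGroup_iff).mp hB.1.eigenvectorUnitary.2, Matrix.mul_one,
      (Matrix.mem_unitaryGroup_iff').mp hA.1.eigenvectorUnitary.2]
  have hWW' : star W * W = 1 := by
    rw [hWdef, StarMul.star_mul, star_star, show star V * U * (star U * V)
        = star V * (U * star U) * V by simp only [Matrix.mul_assoc],
      (Matrix.mem_unitaryGroup_iff).mp hA.1.eigenvectorUnitary.2, Matrix.mul_one,
      (Matrix.mem_unitaryGroup_iff').mp hB.1.eigenvectorUnitary.2]
  have hrow : ∀ i, ∑ j, p i j = 1 := by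
    intro i
    have := congrFun (congrFun hWW i) i
    simp only [Matrix.mul_apply, Matrix.star_apply, Matrix.one_apply_eq] at this
    have : (∑ j, (Complex.normSq (W i j) : ℂ)) = 1 := by
      rw [← this]
      exact Finset.sum_congr rfl fun j _ => by
        rw [Complex.star_def, Complex.mul_conj]
    exact_mod_cast this
  have hcol : ∀ j, ∑ i, p i j = 1 := by
    intro j
    have := congrFun (congrFun hWW' j) j
    simp only [Matrix.mul_apply, Matrix.star_apply, Matrix.one_apply_eq] at this
    have : (∑ i, (Complex.normSq (W i j) : ℂ)) = 1 := by
      rw [← this]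
      exact Finset.sum_congr rfl fun i _ => by
        rw [Complex.star_def, mul_comm, Complex.mul_conj]
    exact_mod_cast this
  -- traces
  have hTA : (mpow A (1 / θ)).trace.re = ∑ i, lam i ^ (1 / θ) := trace_cfc_re' hA.1 _
  have hTB : (mpow B (1 / (1 - θ))).trace.re = ∑ j, mu j ^ (1 / (1 - θ)) := trace_cfc_re' hB.1 _
  have hTr : (A * B).trace.re = ∑ i, ∑ j, lam i * mu j * p i j := trace_mul_re' A B hA.1 hB.1
  rw [hTr, hTA, hTB]
  -- Hölder
  have hpq : Real.HolderConjugate (1/θ) (1/(1-θ)) := by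
    rw [Real.holderConjugate_iff]
    constructor
    · rw [lt_div_iff₀ hθ0]; linarith
    · rw [one_div, one_div, inv_inv, inv_inv]; ring
  set f : Fin d × Fin d → ℝ := fun x => (p x.1 x.2) ^ θ * lam x.1 with hf
  set g : Fin d × Fin d → ℝ := fun x => (p x.1 x.2) ^ (1 - θ) * mu x.2 with hg
  have hfg : ∀ x : Fin d × Fin d, f x * g x = lam x.1 * mu x.2 * p x.1 x.2 := by
    intro x
    rw [hf, hg]
    have : (p x.1 x.2) ^ θ * (p x.1 x.2) ^ (1 - θ) = p x.1 x.2 := by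
      rw [← Real.rpow_add' (hp0 _ _) (by norm_num), add_sub_cancel, Real.rpow_one]
    calc (p x.1 x.2) ^ θ * lam x.1 * ((p x.1 x.2) ^ (1-θ) * mu x.2)
        = ((p x.1 x.2) ^ θ * (p x.1 x.2) ^ (1-θ)) * (lam x.1 * mu x.2) := by ring
      _ = lam x.1 * mu x.2 * p x.1 x.2 := by rw [this]; ring
  have hfp : ∀ x : Fin d × Fin d, f x ^ (1/θ) = p x.1 x.2 * lam x.1 ^ (1/θ) := by
    intro x
    rw [hf, Real.mul_rpow (Real.rpow_nonneg (hp0 _ _) _) (hlam0 _),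
      ← Real.rpow_mul (hp0 _ _), mul_one_div_cancel hθ0.ne', Real.rpow_one]
  have hgq : ∀ x : Fin d × Fin d, g x ^ (1/(1-θ)) = p x.1 x.2 * mu x.2 ^ (1/(1-θ)) := by
    intro x
    rw [hg, Real.mul_rpow (Real.rpow_nonneg (hp0 _ _) _) (hmu0 _),
      ← Real.rpow_mul (hp0 _ _), mul_one_div_cancel hθ1'.ne', Real.rpow_one]
  calc ∑ i, ∑ j, lam i * mu j * p i j
      = ∑ x : Fin d × Fin d, f x * g x := by
        rw [Fintype.sum_prod_type]
        exact Finset.sum_congr rfl fun i _ => Finset.sum_congr rfl fun j _ => (hfg (i,j)).symm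
    _ ≤ (∑ x : Fin d × Fin d, f x ^ (1/θ)) ^ (1/(1/θ))
          * (∑ x : Fin d × Fin d, g x ^ (1/(1-θ))) ^ (1/(1/(1-θ))) :=
        Real.inner_le_Lp_mul_Lq_of_nonneg Finset.univ hpq
          (fun x _ => mul_nonneg (Real.rpow_nonneg (hp0 _ _) _) (hlam0 _))
          (fun x _ => mul_nonneg (Real.rpow_nonneg (hp0 _ _) _) (hmu0 _))
    _ = (∑ i, lam i ^ (1/θ)) ^ θ * (∑ j, mu j ^ (1/(1-θ))) ^ (1-θ) := by
        rw [one_div_one_div, one_div_one_div]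
        congr 2
        · rw [Fintype.sum_prod_type]
          calc ∑ i, ∑ j, f (i,j) ^ (1/θ) = ∑ i, ∑ j, p i j * lam i ^ (1/θ) :=
                Finset.sum_congr rfl fun i _ => Finset.sum_congr rfl fun j _ => hfp (i,j)
            _ = ∑ i, lam i ^ (1/θ) := Finset.sum_congr rfl fun i _ => by
                rw [← Finset.sum_mul, hrow, one_mul]
        · rw [Fintype.sum_prod_type, Finset.sum_comm]
          calc ∑ j, ∑ i, g (i,j) ^ (1/(1-θ)) = ∑ j, ∑ i, p i j * mu j ^ (1/(1-θ)) :=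
                Finset.sum_congr rfl fun j _ => Finset.sum_congr rfl fun i _ => hgq (i,j)
            _ = ∑ j, mu j ^ (1/(1-θ)) := Finset.sum_congr rfl fun j _ => by
                rw [← Finset.sum_mul, hcol, one_mul]
end

section
/- Concavity of the classical auxiliary function: for a classical channel Q(y|x) on finite alphabets and probability distribution P on X, the function E₀(s,P) = −log Σ_y (Σₓ P(x) Q(y|x)^(1/(1+s)))^(1+s) is concave in s on [0, ∞). -/
/-- Two-function Hölder: `∑ aᵢ^p bᵢ^q ≤ (∑ aᵢ)^p (∑ bᵢ)^q` for `p + q = 1`, `p, q > 0`. -/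
lemma holder_sum {ι : Type*} (s : Finset ι) (a b : ι → ℝ)
    (ha : ∀ i ∈ s, 0 ≤ a i) (hb : ∀ i ∈ s, 0 ≤ b i)
    {p q : ℝ} (hp : 0 < p) (hq : 0 < q) (hpq : p + q = 1) :
    ∑ i ∈ s, a i ^ p * b i ^ q ≤ (∑ i ∈ s, a i) ^ p * (∑ i ∈ s, b i) ^ q := by
  have hp1 : p < 1 := by linarith
  have hconj : Real.HolderConjugate p⁻¹ q⁻¹ :=
    Real.holderConjugate_iff.mpr ⟨(one_lt_inv₀ hp).2 hp1, by rw [inv_inv, inv_inv]; exact hpq⟩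
  have h := Real.inner_le_Lp_mul_Lq_of_nonneg (f := fun i => a i ^ p) (g := fun i => b i ^ q) s
    hconj (fun i hi => Real.rpow_nonneg (ha i hi) p) (fun i hi => Real.rpow_nonneg (hb i hi) q)
  have e1 : ∀ i ∈ s, (a i ^ p) ^ (p⁻¹ : ℝ) = a i := fun i hi => by
    rw [← Real.rpow_mul (ha i hi), mul_inv_cancel₀ hp.ne', Real.rpow_one]
  have e2 : ∀ i ∈ s, (b i ^ q) ^ (q⁻¹ : ℝ) = b i := fun i hi => by
    rw [← Real.rpow_mul (hb i hi), mul_inv_cancel₀ hq.ne', Real.rpow_one]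
  rw [Finset.sum_congr rfl e1, Finset.sum_congr rfl e2, one_div, one_div, inv_inv, inv_inv] at h
  exact h

section Gallager

variable {X Y : Type*} [Fintype X] [Fintype Y]

/-- Positivity of the Gallager sum. -/
lemma gallager_pos (P : X → ℝ) (hP : ∀ x, 0 ≤ P x) (hP1 : ∑ x, P x = 1)
    (Q : X → Y → ℝ) (hQ : ∀ x y, 0 ≤ Q x y) (hQ1 : ∀ x, ∑ y, Q x y = 1)
    {s : ℝ} (hs : 0 ≤ s) :
    0 < ∑ y, (∑ x, P x * Q x y ^ (1 / (1 + s))) ^ (1 + s) := by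
  have hts : (0:ℝ) < 1 + s := by linarith
  obtain ⟨x₀, -, hx₀⟩ : ∃ x ∈ Finset.univ, P x ≠ 0 :=
    Finset.exists_ne_zero_of_sum_ne_zero (by rw [hP1]; norm_num)
  obtain ⟨y₀, -, hy₀⟩ : ∃ y ∈ Finset.univ, Q x₀ y ≠ 0 :=
    Finset.exists_ne_zero_of_sum_ne_zero (by rw [hQ1]; norm_num)
  have hinner : ∀ y, 0 ≤ ∑ x, P x * Q x y ^ (1 / (1 + s)) := fun y =>
    Finset.sum_nonneg fun x _ => mul_nonneg (hP x) (Real.rpow_nonneg (hQ x y) _)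
  refine Finset.sum_pos' (fun y _ => Real.rpow_nonneg (hinner y) _) ⟨y₀, Finset.mem_univ _, ?_⟩
  refine Real.rpow_pos_of_pos ?_ _
  refine Finset.sum_pos' (fun x _ => mul_nonneg (hP x) (Real.rpow_nonneg (hQ x y₀) _))
    ⟨x₀, Finset.mem_univ _, ?_⟩
  exact mul_pos ((hP x₀).lt_of_ne (Ne.symm hx₀))
    (Real.rpow_pos_of_pos ((hQ x₀ y₀).lt_of_ne (Ne.symm hy₀)) _)

/-- Log-convexity step: the Gallager sum is multiplicatively convex. -/
lemma gallager_log_convex (P : X → ℝ) (hP : ∀ x, 0 ≤ P x)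
    (Q : X → Y → ℝ) (hQ : ∀ x y, 0 ≤ Q x y)
    {s₁ s₂ a b : ℝ} (hs₁ : 0 ≤ s₁) (hs₂ : 0 ≤ s₂) (ha : 0 < a) (hb : 0 < b) (hab : a + b = 1) :
    ∑ y, (∑ x, P x * Q x y ^ (1 / (1 + (a * s₁ + b * s₂)))) ^ (1 + (a * s₁ + b * s₂)) ≤
      (∑ y, (∑ x, P x * Q x y ^ (1 / (1 + s₁))) ^ (1 + s₁)) ^ a *
      (∑ y, (∑ x, P x * Q x y ^ (1 / (1 + s₂))) ^ (1 + s₂)) ^ b := by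
  set t₁ : ℝ := 1 + s₁ with ht₁
  set t₂ : ℝ := 1 + s₂ with ht₂
  set t : ℝ := 1 + (a * s₁ + b * s₂) with ht
  have ht₁pos : 0 < t₁ := by rw [ht₁]; linarith
  have ht₂pos : 0 < t₂ := by rw [ht₂]; linarith
  have htpos : 0 < t := by
    rw [ht]; nlinarith [mul_nonneg ha.le hs₁, mul_nonneg hb.le hs₂]
  have hteq : t = a * t₁ + b * t₂ := by rw [ht, ht₁, ht₂]; ring_nf; linarith
  set p : ℝ := a * t₁ / t with hp
  set q : ℝ := b * t₂ / t with hq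
  have hppos : 0 < p := by positivity
  have hqpos : 0 < q := by positivity
  have hpq : p + q = 1 := by
    rw [hp, hq, ← add_div, ← hteq, div_self htpos.ne']
  set A : Y → ℝ := fun y => ∑ x, P x * Q x y ^ (1 / t₁) with hA
  set B : Y → ℝ := fun y => ∑ x, P x * Q x y ^ (1 / t₂) with hB
  have hAnn : ∀ y, 0 ≤ A y := fun y =>
    Finset.sum_nonneg fun x _ => mul_nonneg (hP x) (Real.rpow_nonneg (hQ x y) _)
  have hBnn : ∀ y, 0 ≤ B y := fun y =>
    Finset.sum_nonneg fun x _ => mul_nonneg (hP x) (Real.rpow_nonneg (hQ x y) _)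
  -- Step 1: inner Hölder
  have step1 : ∀ y, (∑ x, P x * Q x y ^ (1 / t)) ≤ A y ^ p * B y ^ q := by
    intro y
    have hpt : ∀ x : X, P x * Q x y ^ (1 / t) =
        (P x * Q x y ^ (1 / t₁)) ^ p * (P x * Q x y ^ (1 / t₂)) ^ q := by
      intro x
      rw [Real.mul_rpow (hP x) (Real.rpow_nonneg (hQ x y) _),
          Real.mul_rpow (hP x) (Real.rpow_nonneg (hQ x y) _),
          ← Real.rpow_mul (hQ x y), ← Real.rpow_mul (hQ x y)]
      have e1 : 1 / t₁ * p = a / t := by rw [hp]; field_simp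
      have e2 : 1 / t₂ * q = b / t := by rw [hq]; field_simp
      rw [e1, e2]
      have e3 : P x ^ p * Q x y ^ (a / t) * (P x ^ q * Q x y ^ (b / t)) =
          (P x ^ p * P x ^ q) * (Q x y ^ (a / t) * Q x y ^ (b / t)) := by ring
      rw [e3, ← Real.rpow_add' (hP x) (by rw [hpq]; norm_num),
          ← Real.rpow_add' (hQ x y) (by
            rw [← add_div, hab]
            exact one_div_ne_zero htpos.ne'),
          hpq, Real.rpow_one, ← add_div, hab]
    calc (∑ x, P x * Q x y ^ (1 / t))
        = ∑ x, (P x * Q x y ^ (1 / t₁)) ^ p * (P x * Q x y ^ (1 / t₂)) ^ q :=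
          Finset.sum_congr rfl fun x _ => hpt x
      _ ≤ A y ^ p * B y ^ q :=
          holder_sum Finset.univ _ _
            (fun x _ => mul_nonneg (hP x) (Real.rpow_nonneg (hQ x y) _))
            (fun x _ => mul_nonneg (hP x) (Real.rpow_nonneg (hQ x y) _)) hppos hqpos hpq
  -- Step 2: raise to the power t
  have step2 : ∀ y, (∑ x, P x * Q x y ^ (1 / t)) ^ t ≤ (A y ^ t₁) ^ a * (B y ^ t₂) ^ b := by
    intro y
    have hlnn : 0 ≤ ∑ x, P x * Q x y ^ (1 / t) :=
      Finset.sum_nonneg fun x _ => mul_nonneg (hP x) (Real.rpow_nonneg (hQ x y) _)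
    calc (∑ x, P x * Q x y ^ (1 / t)) ^ t
        ≤ (A y ^ p * B y ^ q) ^ t :=
          Real.rpow_le_rpow hlnn (step1 y) htpos.le
      _ = (A y ^ t₁) ^ a * (B y ^ t₂) ^ b := by
          rw [Real.mul_rpow (Real.rpow_nonneg (hAnn y) _) (Real.rpow_nonneg (hBnn y) _),
              ← Real.rpow_mul (hAnn y), ← Real.rpow_mul (hBnn y),
              ← Real.rpow_mul (hAnn y), ← Real.rpow_mul (hBnn y)]
          congr 2
          · rw [hp]; field_simp
          · rw [hq]; field_simp
  -- Step 3: outer Hölder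
  calc (∑ y, (∑ x, P x * Q x y ^ (1 / t)) ^ t)
      ≤ ∑ y, (A y ^ t₁) ^ a * (B y ^ t₂) ^ b := Finset.sum_le_sum fun y _ => step2 y
    _ ≤ (∑ y, A y ^ t₁) ^ a * (∑ y, B y ^ t₂) ^ b :=
        holder_sum Finset.univ _ _
          (fun y _ => Real.rpow_nonneg (hAnn y) _)
          (fun y _ => Real.rpow_nonneg (hBnn y) _) ha hb hab

end Gallager

open scoped ComplexOrder

theorem classical_auxiliary_function_concave {X Y : Type*} [Fintype X] [Fintype Y]
    (P : X → ℝ) (hP : ∀ x, 0 ≤ P x) (hP1 : ∑ x, P x = 1)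
    (Q : X → Y → ℝ) (hQ : ∀ x y, 0 ≤ Q x y) (hQ1 : ∀ x, ∑ y, Q x y = 1) :
    ConcaveOn ℝ (Set.Ici (0 : ℝ))
      (fun s => -Real.log (∑ y, (∑ x, P x * Q x y ^ (1 / (1 + s))) ^ (1 + s))) := by
  constructor
  · exact convex_Ici 0
  · intro s₁ hs₁ s₂ hs₂ a b ha hb hab
    simp only [Set.mem_Ici] at hs₁ hs₂
    simp only [smul_eq_mul]
    rcases eq_or_lt_of_le ha with rfl | ha'
    · have hb1 : b = 1 := by linarith
      subst hb1; simp
    rcases eq_or_lt_of_le hb with rfl | hb'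
    · have ha1 : a = 1 := by linarith
      subst ha1; simp
    have hkey := gallager_log_convex P hP Q hQ hs₁ hs₂ ha' hb' hab
    have hc : (0:ℝ) ≤ a * s₁ + b * s₂ :=
      add_nonneg (mul_nonneg ha hs₁) (mul_nonneg hb hs₂)
    have hGc := gallager_pos P hP hP1 Q hQ hQ1 hc
    have hG1 := gallager_pos P hP hP1 Q hQ hQ1 hs₁
    have hG2 := gallager_pos P hP hP1 Q hQ hQ1 hs₂
    have hlog := Real.log_le_log hGc hkey
    rw [Real.log_mul (Real.rpow_pos_of_pos hG1 a).ne' (Real.rpow_pos_of_pos hG2 b).ne',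
        Real.log_rpow hG1, Real.log_rpow hG2] at hlog
    linarith
end
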